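/- arXiv:2507.02638 — 8 statements merged into one kernel-verified Lean document; each statement's English description precedes it below -/
import Mathlib

section
/- Let A, B ⊂ R^d with |A ∩ B| > 0 and |B \ A| < ∞. Define the extension operator Φ : L^p(A ∩ B) → L^p(B) by Φ(u)(x) = u(x) for x ∈ A ∩ B and Φ(u)(x) = u_{A∩B} (the mean of u over A ∩ B) for x ∈ B \ A. Then Φ is linear, Φ(u) = u on A ∩ B, ∫_B |Φ(u)|^p ≤ (1 + |B \ A|/|A ∩ B|) ∫_{A∩B} |u|^p, and ∫_{B×B} |Φ(u)(x) − Φ(u)(y)|^p dx dy ≤ (1 + 2|B \ A|/|A ∩ B|) ∫_{(A∩B)×(A∩B)} |u(x) − u(y)|^p dx dy. -/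
open MeasureTheory ENNReal Classical

open scoped Classical


private lemma jensen_key {X : Type*} [MeasurableSpace X] (μ : Measure X) [IsFiniteMeasure μ]
    (hμ : μ ≠ 0) (p : ℝ) (hp : 1 ≤ p) (v : X → ℝ) (hv : Integrable v μ)
    (hv2 : Integrable (fun x => |v x| ^ p) μ) :
    ENNReal.ofReal (|(μ Set.univ).toReal⁻¹ * ∫ x, v x ∂μ| ^ p) * μ Set.univ
      ≤ ∫⁻ x, ENNReal.ofReal (|v x| ^ p) ∂μ := by
  haveI : NeZero μ := ⟨hμ⟩
  have hp0 : (0:ℝ) ≤ p := le_trans zero_le_one hp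
  have hmne : μ Set.univ ≠ 0 := (Measure.measure_univ_ne_zero).2 hμ
  have hmtop : μ Set.univ ≠ ⊤ := measure_ne_top _ _
  have hm0 : 0 < (μ Set.univ).toReal := ENNReal.toReal_pos hmne hmtop
  -- step 1
  have step1 : |(μ Set.univ).toReal⁻¹ * ∫ x, v x ∂μ| ≤ ⨍ x, |v x| ∂μ := by
    rw [average_eq, smul_eq_mul, measureReal_def, abs_mul, abs_of_nonneg (inv_nonneg.2 hm0.le)]
    gcongr
    simpa [Real.norm_eq_abs] using norm_integral_le_integral_norm (μ := μ) v
  have step2 : (⨍ x, |v x| ∂μ) ^ p ≤ ⨍ x, |v x| ^ p ∂μ := by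
    have := (convexOn_rpow hp).map_average_le
      (ContinuousOn.rpow_const continuousOn_id fun x _ => Or.inr hp0)
      isClosed_Ici (Filter.Eventually.of_forall fun x => abs_nonneg (v x)) hv.abs ?_
    · exact this
    · exact hv2
  have step3 : |(μ Set.univ).toReal⁻¹ * ∫ x, v x ∂μ| ^ p ≤ ⨍ x, |v x| ^ p ∂μ :=
    le_trans (Real.rpow_le_rpow (abs_nonneg _) step1 hp0) step2
  calc ENNReal.ofReal (|(μ Set.univ).toReal⁻¹ * ∫ x, v x ∂μ| ^ p) * μ Set.univ
      ≤ ENNReal.ofReal (⨍ x, |v x| ^ p ∂μ) * μ Set.univ := by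
        gcongr
    _ = ENNReal.ofReal (∫ x, |v x| ^ p ∂μ) := by
        have key : ENNReal.ofReal (μ Set.univ).toReal⁻¹ * μ Set.univ = 1 := by
          rw [ENNReal.ofReal_inv_of_pos hm0, ENNReal.ofReal_toReal hmtop,
            ENNReal.inv_mul_cancel hmne hmtop]
        rw [average_eq, smul_eq_mul, measureReal_def, ENNReal.ofReal_mul (inv_nonneg.2 hm0.le),
          mul_right_comm, key, one_mul]
    _ = ∫⁻ x, ENNReal.ofReal (|v x| ^ p) ∂μ :=
        ofReal_integral_eq_lintegral_ofReal hv2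
          (Filter.Eventually.of_forall fun x => Real.rpow_nonneg (abs_nonneg _) p)

/-- piecewise-average extension operator from `A ∩ B` to `B`. -/
theorem stmt_2 {d : ℕ} (A B : Set (EuclideanSpace ℝ (Fin d)))
    (hAm : MeasurableSet A) (hBm : MeasurableSet B)
    (h0 : 0 < volume (A ∩ B)) (hfin : volume (A ∩ B) < ⊤)
    (hdiff : volume (B \ A) < ⊤)
    (p : ℝ) (hp : 1 ≤ p) :
    let Φ : (EuclideanSpace ℝ (Fin d) → ℝ) → EuclideanSpace ℝ (Fin d) → ℝ :=
      fun v x => if x ∈ A ∩ B then v x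
        else ((volume (A ∩ B)).toReal)⁻¹ * ∫ y in A ∩ B, v y
    (∀ u v : EuclideanSpace ℝ (Fin d) → ℝ,
        MemLp u (ENNReal.ofReal p) (volume.restrict (A ∩ B)) →
        MemLp v (ENNReal.ofReal p) (volume.restrict (A ∩ B)) →
        ∀ c : ℝ, Φ (fun x => c * u x + v x) = fun x => c * Φ u x + Φ v x) ∧
    ∀ u : EuclideanSpace ℝ (Fin d) → ℝ,
      MemLp u (ENNReal.ofReal p) (volume.restrict (A ∩ B)) →
      (∀ x ∈ A ∩ B, Φ u x = u x) ∧
      (∫⁻ x in B, ENNReal.ofReal (|Φ u x| ^ p)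
        ≤ ENNReal.ofReal (1 + (volume (B \ A)).toReal / (volume (A ∩ B)).toReal) *
          ∫⁻ x in A ∩ B, ENNReal.ofReal (|u x| ^ p)) ∧
      (∫⁻ x in B, ∫⁻ y in B, ENNReal.ofReal (|Φ u x - Φ u y| ^ p)
        ≤ ENNReal.ofReal (1 + 2 * (volume (B \ A)).toReal / (volume (A ∩ B)).toReal) *
          ∫⁻ x in A ∩ B, ∫⁻ y in A ∩ B, ENNReal.ofReal (|u x - u y| ^ p)) := by
  intro Φ
  have hp0 : (0:ℝ) ≤ p := zero_le_one.trans hp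
  have hpne : (0:ℝ) < p := lt_of_lt_of_le zero_lt_one hp
  have hpq : (1:ℝ≥0∞) ≤ ENNReal.ofReal p := ENNReal.one_le_ofReal.2 hp
  have hSm : MeasurableSet (A ∩ B) := hAm.inter hBm
  have hDm : MeasurableSet (B \ A) := hBm.diff hAm
  set μ := volume.restrict (A ∩ B) with hμdef
  have hμuniv : μ Set.univ = volume (A ∩ B) := Measure.restrict_apply_univ _
  haveI : IsFiniteMeasure μ := ⟨by rw [hμuniv]; exact hfin⟩
  have hμne : μ ≠ 0 := by
    rw [← Measure.measure_univ_ne_zero, hμuniv]; exact h0.ne'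
  have hmr : 0 < (volume (A ∩ B)).toReal := ENNReal.toReal_pos h0.ne' hfin.ne
  have hBsplit : (A ∩ B) ∪ (B \ A) = B := by
    ext x; by_cases h : x ∈ A <;> simp [h]
  have hdisj : Disjoint (A ∩ B) (B \ A) := by
    rw [Set.disjoint_left]
    rintro x ⟨hxA, -⟩ ⟨-, hxA'⟩
    exact hxA' hxA
  have hBint : ∀ f : EuclideanSpace ℝ (Fin d) → ℝ≥0∞,
      ∫⁻ x in B, f x = (∫⁻ x in A ∩ B, f x) + ∫⁻ x in B \ A, f x := by
    intro f
    conv_lhs => rw [← hBsplit]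
    exact lintegral_union hDm hdisj
  have hint : ∀ u : EuclideanSpace ℝ (Fin d) → ℝ,
      MemLp u (ENNReal.ofReal p) μ → Integrable u μ := fun u hu => hu.integrable hpq
  have hintp : ∀ u : EuclideanSpace ℝ (Fin d) → ℝ,
      MemLp u (ENNReal.ofReal p) μ → Integrable (fun x => |u x| ^ p) μ := by
    intro u hu
    simpa [Real.norm_eq_abs, ENNReal.toReal_ofReal hp0] using
      hu.integrable_norm_rpow (ENNReal.ofReal_pos.2 hpne).ne' ENNReal.ofReal_ne_top
  constructor
  · -- linearity
    intro u v hu hv c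
    funext x
    show (if x ∈ A ∩ B then c * u x + v x
        else ((volume (A ∩ B)).toReal)⁻¹ * ∫ y in A ∩ B, (c * u y + v y)) = _
    by_cases hx : x ∈ A ∩ B
    · obtain ⟨h1, h2⟩ := hx
      simp [Φ, h1, h2]
    · simp only [Φ, if_neg hx]
      rw [integral_add ((hint u hu).const_mul c) (hint v hv),
        MeasureTheory.integral_const_mul]
      ring
  · intro u hu
    have hui : Integrable u μ := hint u hu
    set c : ℝ := ((volume (A ∩ B)).toReal)⁻¹ * ∫ y in A ∩ B, u y with hc
    have hΦin : ∀ x ∈ A ∩ B, Φ u x = u x := fun x hx => if_pos hx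
    have hΦout : ∀ x ∈ B \ A, Φ u x = c := by
      intro x hx
      have : x ∉ A ∩ B := fun h => hx.2 h.1
      exact if_neg this
    refine ⟨hΦin, ?_, ?_⟩
    · -- Lp bound
      set I := ∫⁻ x in A ∩ B, ENNReal.ofReal (|u x| ^ p) with hI
      have key0 : ENNReal.ofReal (|c| ^ p) * volume (A ∩ B) ≤ I := by
        have := jensen_key μ hμne p hp u hui (hintp u hu)
        rwa [hμuniv] at this
      have hcle : ENNReal.ofReal (|c| ^ p) ≤ I / volume (A ∩ B) :=
        (ENNReal.le_div_iff_mul_le (Or.inl h0.ne') (Or.inl hfin.ne)).2 key0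
      have hL : ∫⁻ x in B, ENNReal.ofReal (|Φ u x| ^ p)
          = I + ENNReal.ofReal (|c| ^ p) * volume (B \ A) := by
        rw [hBint]
        congr 1
        · exact setLIntegral_congr_fun hSm
            (fun x hx => by rw [hΦin x hx])
        · rw [setLIntegral_congr_fun hDm
            (fun x hx => by rw [hΦout x hx]),
            setLIntegral_const]
      have hcoef : ENNReal.ofReal (1 + (volume (B \ A)).toReal / (volume (A ∩ B)).toReal)
          = 1 + volume (B \ A) / volume (A ∩ B) := by
        rw [ENNReal.ofReal_add zero_le_one
            (div_nonneg ENNReal.toReal_nonneg ENNReal.toReal_nonneg),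
          ENNReal.ofReal_one, ENNReal.ofReal_div_of_pos hmr,
          ENNReal.ofReal_toReal hdiff.ne, ENNReal.ofReal_toReal hfin.ne]
      rw [hL, hcoef, add_mul, one_mul]
      refine add_le_add le_rfl ?_
      calc ENNReal.ofReal (|c| ^ p) * volume (B \ A)
          ≤ I / volume (A ∩ B) * volume (B \ A) :=
            mul_le_mul_left hcle _
        _ = volume (B \ A) / volume (A ∩ B) * I := by
            simp only [div_eq_mul_inv]; ring
    · -- Gagliardo seminorm bound
      set G : EuclideanSpace ℝ (Fin d) → ℝ≥0∞ :=
        fun x => ∫⁻ y in A ∩ B, ENNReal.ofReal (|u x - u y| ^ p) with hG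
      set J := ∫⁻ x in A ∩ B, G x with hJ
      set m := volume (A ∩ B) with hm
      have hminv : m⁻¹ ≠ ⊤ := by
        exact ENNReal.inv_ne_top.2 h0.ne'
      have keyt : ∀ t : ℝ, ENNReal.ofReal (|t - c| ^ p)
          ≤ (∫⁻ y in A ∩ B, ENNReal.ofReal (|t - u y| ^ p)) * m⁻¹ := by
        intro t
        have hvi : Integrable (fun y => t - u y) μ := (integrable_const t).sub hui
        have hvp : Integrable (fun y => |t - u y| ^ p) μ :=
          hintp _ ((memLp_const t).sub hu)
        have h1 := jensen_key μ hμne p hp (fun y => t - u y) hvi hvp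
        have hmean : (μ Set.univ).toReal⁻¹ * ∫ y, (t - u y) ∂μ = t - c := by
          rw [integral_sub (integrable_const t) hui, integral_const, measureReal_def, hμuniv, smul_eq_mul, hc]
          field_simp
          ring
        rw [hmean, hμuniv] at h1
        rw [← div_eq_mul_inv]
        exact (ENNReal.le_div_iff_mul_le (Or.inl h0.ne') (Or.inl hfin.ne)).2 h1
      have hInner : ∀ x, ∫⁻ y in B, ENNReal.ofReal (|Φ u x - Φ u y| ^ p)
          = (∫⁻ y in A ∩ B, ENNReal.ofReal (|Φ u x - u y| ^ p))
            + ENNReal.ofReal (|Φ u x - c| ^ p) * volume (B \ A) := by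
        intro x
        rw [hBint]
        congr 1
        · exact setLIntegral_congr_fun hSm
            (fun y hy => by rw [hΦin y hy])
        · rw [setLIntegral_congr_fun hDm
            (fun y hy => by rw [hΦout y hy]),
            setLIntegral_const]
      have houter : ∫⁻ x in B, ∫⁻ y in B, ENNReal.ofReal (|Φ u x - Φ u y| ^ p)
          = (∫⁻ x in A ∩ B, ((∫⁻ y in A ∩ B, ENNReal.ofReal (|u x - u y| ^ p))
              + ENNReal.ofReal (|u x - c| ^ p) * volume (B \ A)))
            + (∫⁻ y in A ∩ B, ENNReal.ofReal (|c - u y| ^ p)) * volume (B \ A) := by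
        rw [hBint]
        congr 1
        · refine setLIntegral_congr_fun hSm (fun x hx => ?_)
          rw [hInner x, hΦin x hx]
        · rw [setLIntegral_congr_fun hDm
            (fun x hx => ?_), setLIntegral_const]
          rw [hInner x, hΦout x hx, sub_self, abs_zero, Real.zero_rpow hpne.ne',
            ENNReal.ofReal_zero, zero_mul, add_zero]
      have hbound1 : ∫⁻ x in A ∩ B, ((∫⁻ y in A ∩ B, ENNReal.ofReal (|u x - u y| ^ p))
              + ENNReal.ofReal (|u x - c| ^ p) * volume (B \ A))
          ≤ J * (1 + m⁻¹ * volume (B \ A)) := by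
        calc ∫⁻ x in A ∩ B, (G x + ENNReal.ofReal (|u x - c| ^ p) * volume (B \ A))
            ≤ ∫⁻ x in A ∩ B, G x * (1 + m⁻¹ * volume (B \ A)) := by
              refine lintegral_mono fun x => ?_
              have := mul_le_mul_left (keyt (u x)) (volume (B \ A))
              calc G x + ENNReal.ofReal (|u x - c| ^ p) * volume (B \ A)
                  ≤ G x + G x * m⁻¹ * volume (B \ A) := add_le_add le_rfl this
                _ = G x * (1 + m⁻¹ * volume (B \ A)) := by ring
          _ = J * (1 + m⁻¹ * volume (B \ A)) := by
              rw [hJ]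
              exact lintegral_mul_const' _ _ (by
                refine ENNReal.add_ne_top.2 ⟨ENNReal.one_ne_top, ENNReal.mul_ne_top hminv hdiff.ne⟩)
      have hbound2 : (∫⁻ y in A ∩ B, ENNReal.ofReal (|c - u y| ^ p)) * volume (B \ A)
          ≤ J * m⁻¹ * volume (B \ A) := by
        refine mul_le_mul_left ?_ _
        calc ∫⁻ y in A ∩ B, ENNReal.ofReal (|c - u y| ^ p)
            = ∫⁻ y in A ∩ B, ENNReal.ofReal (|u y - c| ^ p) := by
              simp_rw [abs_sub_comm]
          _ ≤ ∫⁻ y in A ∩ B, G y * m⁻¹ := lintegral_mono fun y => keyt (u y)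
          _ = J * m⁻¹ := lintegral_mul_const' _ _ hminv
      have hcoef : ENNReal.ofReal (1 + 2 * (volume (B \ A)).toReal / (volume (A ∩ B)).toReal)
          = 1 + 2 * volume (B \ A) / m := by
        rw [ENNReal.ofReal_add zero_le_one
            (div_nonneg (by positivity) ENNReal.toReal_nonneg),
          ENNReal.ofReal_one, ENNReal.ofReal_div_of_pos hmr, ENNReal.ofReal_mul zero_le_two,
          ENNReal.ofReal_toReal hdiff.ne, ENNReal.ofReal_toReal hfin.ne]
        norm_num
      rw [houter, hcoef]
      calc _ ≤ J * (1 + m⁻¹ * volume (B \ A)) + J * m⁻¹ * volume (B \ A) :=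
            add_le_add hbound1 hbound2
        _ = (1 + 2 * volume (B \ A) / m) * J := by
            rw [div_eq_mul_inv]; ring
end

section
/- Let M ⊂ R^d be measurable, p ≥ 1, and suppose there exist κ_0 > 0, r_0 > 0 with |M ∩ B_{r_0}(η)|/|B_{r_0}| ≥ κ_0 for all η ∈ M. Suppose η', η'' ∈ M are connected by a discrete path η_0 = η', η_1, ..., η_N, η_{N+1} = η'' in M with |η_{j+1} − η_j| ≤ r_1 for all j. Then, writing B_i := M ∩ B_{r_0}(η_i) and r := 2r_0 + r_1, one has ∫_{B_0 × B_{N+1}} |u(x) − u(y)|^p dx dy ≤ ((N+1)^p / κ_0^2) ∫_{(⋃_i B_{r_0}(η_i) ∩ M)^2 ∩ {|x−y| ≤ r}} |u(x) − u(y)|^p dx dy for every u ∈ L^p(M). -/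
open MeasureTheory ENNReal
open scoped Classical

open Metric Set

lemma mink3 {E : Type*} [MeasurableSpace E] (μ ν σ : Measure E)
    [IsProbabilityMeasure μ] [IsProbabilityMeasure ν] [IsProbabilityMeasure σ]
    (p : ℝ) (hp : 1 ≤ p) (u : E → ℝ) (hu : Measurable u) :
    (∫⁻ x, ∫⁻ y, ENNReal.ofReal (|u x - u y| ^ p) ∂σ ∂μ) ^ (1/p) ≤
    (∫⁻ x, ∫⁻ z, ENNReal.ofReal (|u x - u z| ^ p) ∂ν ∂μ) ^ (1/p) +
    (∫⁻ z, ∫⁻ y, ENNReal.ofReal (|u z - u y| ^ p) ∂σ ∂ν) ^ (1/p) := by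
  have hp0 : (0:ℝ) < p := lt_of_lt_of_le one_pos hp
  set PP : Measure (E × E × E) := μ.prod (ν.prod σ) with hPP
  set F₁ : E × E × E → ℝ≥0∞ := fun w => ENNReal.ofReal |u w.1 - u w.2.1| with hF₁
  set F₂ : E × E × E → ℝ≥0∞ := fun w => ENNReal.ofReal |u w.2.1 - u w.2.2| with hF₂
  have m1 : Measurable F₁ :=
    (((hu.comp measurable_fst).sub (hu.comp (measurable_fst.comp measurable_snd))).abs).ennreal_ofReal
  have m2 : Measurable F₂ :=
    (((hu.comp (measurable_fst.comp measurable_snd)).sub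
      (hu.comp (measurable_snd.comp measurable_snd))).abs).ennreal_ofReal
  have m0 : Measurable fun w : E × E × E => ENNReal.ofReal (|u w.1 - u w.2.2| ^ p) :=
    ((((hu.comp measurable_fst).sub (hu.comp (measurable_snd.comp measurable_snd))).abs.pow_const p)).ennreal_ofReal
  have eq0 : ∫⁻ w, ENNReal.ofReal (|u w.1 - u w.2.2| ^ p) ∂PP
      = ∫⁻ x, ∫⁻ y, ENNReal.ofReal (|u x - u y| ^ p) ∂σ ∂μ := by
    rw [hPP, lintegral_prod _ m0.aemeasurable]
    refine lintegral_congr fun x => ?_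
    rw [lintegral_prod _ (by fun_prop : Measurable fun q : E × E =>
      ENNReal.ofReal (|u x - u q.2| ^ p)).aemeasurable]
    simp [lintegral_const]
  have eq1 : ∫⁻ w, F₁ w ^ p ∂PP = ∫⁻ x, ∫⁻ z, ENNReal.ofReal (|u x - u z| ^ p) ∂ν ∂μ := by
    rw [hPP, lintegral_prod _ ((m1.pow_const p)).aemeasurable]
    refine lintegral_congr fun x => ?_
    rw [lintegral_prod _ (by fun_prop : Measurable fun q : E × E =>
      (ENNReal.ofReal |u x - u q.1|) ^ p).aemeasurable]
    simp only [hF₁, lintegral_const, measure_univ, mul_one]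
    exact lintegral_congr fun z => ENNReal.ofReal_rpow_of_nonneg (abs_nonneg _) hp0.le
  have eq2 : ∫⁻ w, F₂ w ^ p ∂PP = ∫⁻ z, ∫⁻ y, ENNReal.ofReal (|u z - u y| ^ p) ∂σ ∂ν := by
    rw [hPP, lintegral_prod _ ((m2.pow_const p)).aemeasurable]
    simp only [hF₂]
    rw [lintegral_const, measure_univ, mul_one,
      lintegral_prod _ (by fun_prop : Measurable fun q : E × E =>
        (ENNReal.ofReal |u q.1 - u q.2|) ^ p).aemeasurable]
    exact lintegral_congr fun z => lintegral_congr fun y =>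
      ENNReal.ofReal_rpow_of_nonneg (abs_nonneg _) hp0.le
  have tri : ∀ w : E × E × E, ENNReal.ofReal (|u w.1 - u w.2.2| ^ p) ≤ (F₁ w + F₂ w) ^ p := by
    intro w
    rw [← ENNReal.ofReal_rpow_of_nonneg (abs_nonneg _) hp0.le]
    refine ENNReal.rpow_le_rpow ?_ hp0.le
    rw [← ENNReal.ofReal_add (abs_nonneg _) (abs_nonneg _)]
    exact ENNReal.ofReal_le_ofReal (abs_sub_le _ _ _)
  calc (∫⁻ x, ∫⁻ y, ENNReal.ofReal (|u x - u y| ^ p) ∂σ ∂μ) ^ (1/p)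
      = (∫⁻ w, ENNReal.ofReal (|u w.1 - u w.2.2| ^ p) ∂PP) ^ (1/p) := by rw [eq0]
    _ ≤ (∫⁻ w, (F₁ w + F₂ w) ^ p ∂PP) ^ (1/p) :=
        ENNReal.rpow_le_rpow (lintegral_mono tri) (by positivity)
    _ ≤ (∫⁻ w, F₁ w ^ p ∂PP) ^ (1/p) + (∫⁻ w, F₂ w ^ p ∂PP) ^ (1/p) :=
        ENNReal.lintegral_Lp_add_le m1.aemeasurable m2.aemeasurable hp
    _ = _ := by rw [eq1, eq2]


private lemma stmt3_meas {d : ℕ} (M : Set (EuclideanSpace ℝ (Fin d))) (hM : MeasurableSet M)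
    (p : ℝ) (hp : 1 ≤ p) (κ₀ r₀ r₁ : ℝ) (hκ : 0 < κ₀) (hr₀ : 0 < r₀) (hr₁ : 0 < r₁)
    (hdens : ∀ η ∈ M, ENNReal.ofReal κ₀ * volume (Metric.ball η r₀)
      ≤ volume (M ∩ Metric.ball η r₀))
    (N : ℕ) (η : Fin (N + 2) → EuclideanSpace ℝ (Fin d))
    (hηM : ∀ i, η i ∈ M)
    (hstep : ∀ i : Fin (N + 1), dist (η i.succ) (η i.castSucc) ≤ r₁)
    (u : EuclideanSpace ℝ (Fin d) → ℝ)
    (hu : Measurable u) :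
    ∫⁻ x in M ∩ Metric.ball (η 0) r₀,
      ∫⁻ y in M ∩ Metric.ball (η (Fin.last (N + 1))) r₀,
        ENNReal.ofReal (|u x - u y| ^ p)
    ≤ ENNReal.ofReal ((N + 1 : ℝ) ^ p / κ₀ ^ 2) *
      ∫⁻ x in M ∩ ⋃ i, Metric.ball (η i) r₀,
        ∫⁻ y in M ∩ ⋃ i, Metric.ball (η i) r₀,
          if dist x y ≤ 2 * r₀ + r₁ then ENNReal.ofReal (|u x - u y| ^ p) else 0 := by
  have hp0 : (0:ℝ) < p := lt_of_lt_of_le one_pos hp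
  let E := EuclideanSpace ℝ (Fin d)
  set U : Set E := M ∩ ⋃ i, Metric.ball (η i) r₀ with hU
  set R : ℝ≥0∞ := ∫⁻ x in U, ∫⁻ y in U,
      if dist x y ≤ 2 * r₀ + r₁ then ENNReal.ofReal (|u x - u y| ^ p) else 0 with hR
  set B : Fin (N+2) → Set E := fun i => M ∩ Metric.ball (η i) r₀ with hB
  have hBU : ∀ i, B i ⊆ U := fun i =>
    inter_subset_inter_right _ (subset_iUnion (fun i => Metric.ball (η i) r₀) i)
  set v : Fin (N+2) → ℝ≥0∞ := fun i => volume (B i) with hv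
  set w : ℝ≥0∞ := volume (Metric.ball (0 : E) r₀) with hw
  have hball : ∀ x : E, volume (Metric.ball x r₀) = w := fun x =>
    Measure.addHaar_ball_center volume x r₀
  have hw0 : w ≠ 0 := (measure_ball_pos _ _ hr₀).ne'
  have hwt : w ≠ ∞ := measure_ball_lt_top.ne
  set κ : ℝ≥0∞ := ENNReal.ofReal κ₀ with hκ'
  have hκ0 : κ ≠ 0 := (ENNReal.ofReal_pos.2 hκ).ne'
  have hκt : κ ≠ ∞ := ENNReal.ofReal_ne_top
  have hvlow : ∀ i, κ * w ≤ v i := fun i => by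
    rw [← hball (η i)]; exact hdens _ (hηM i)
  have hvhigh : ∀ i, v i ≤ w := fun i => by
    rw [← hball (η i)]; exact measure_mono inter_subset_right
  have hv0 : ∀ i, v i ≠ 0 := fun i =>
    (lt_of_lt_of_le (by exact ENNReal.mul_pos hκ0 hw0) (hvlow i)).ne'
  have hvt : ∀ i, v i ≠ ∞ := fun i => ((hvhigh i).trans_lt hwt.lt_top).ne
  set μ : Fin (N+2) → Measure E := fun i => (v i)⁻¹ • volume.restrict (B i) with hμ
  have hprob : ∀ i, IsProbabilityMeasure (μ i) := fun i => ⟨by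
    simp [hμ, Measure.smul_apply, smul_eq_mul, Measure.restrict_apply_univ,
      ENNReal.inv_mul_cancel (hv0 i) (hvt i)]
    exact ENNReal.inv_mul_cancel (hv0 i) (hvt i)⟩
  set T : Fin (N+2) → Fin (N+2) → ℝ≥0∞ := fun i j =>
    ∫⁻ x, ∫⁻ y, ENNReal.ofReal (|u x - u y| ^ p) ∂(μ j) ∂(μ i) with hT
  have hTval : ∀ i j, T i j = (v i)⁻¹ * ((v j)⁻¹ *
      ∫⁻ x in B i, ∫⁻ y in B j, ENNReal.ofReal (|u x - u y| ^ p)) := by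
    intro i j
    rw [hT]
    simp only [hμ, lintegral_smul_measure, smul_eq_mul]
    rw [lintegral_const_mul' _ _ (ENNReal.inv_ne_top.2 (hv0 j))]
  set C : ℝ≥0∞ := (κ * w)⁻¹ * ((κ * w)⁻¹ * R) with hC
  -- adjacency bound
  have hIR : ∀ i j : Fin (N+2), dist (η i) (η j) ≤ r₁ →
      (∫⁻ x in B i, ∫⁻ y in B j, ENNReal.ofReal (|u x - u y| ^ p)) ≤ R := by
    intro i j hij
    have hBmeas : MeasurableSet (B j) := hM.inter measurableSet_ball
    have step1 : (∫⁻ x in B i, ∫⁻ y in B j, ENNReal.ofReal (|u x - u y| ^ p))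
        = ∫⁻ x in B i, ∫⁻ y in B j,
            if dist x y ≤ 2 * r₀ + r₁ then ENNReal.ofReal (|u x - u y| ^ p) else 0 := by
      refine setLIntegral_congr_fun (hM.inter measurableSet_ball) (fun x hx => ?_)
      refine setLIntegral_congr_fun hBmeas (fun y hy => ?_)
      have hd : dist x y ≤ 2 * r₀ + r₁ := by
        have h1 : dist x (η i) < r₀ := mem_ball.1 hx.2
        have h2 : dist y (η j) < r₀ := mem_ball.1 hy.2
        calc dist x y ≤ dist x (η i) + dist (η i) (η j) + dist (η j) y := dist_triangle4 _ _ _ _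
          _ ≤ r₀ + r₁ + r₀ := by
              have := dist_comm (η j) y ▸ h2
              nlinarith [dist_comm (η j) y, h1, h2, hij]
          _ = 2 * r₀ + r₁ := by ring
      rw [if_pos hd]
    rw [step1, hR]
    refine le_trans (lintegral_mono fun x => ?_)
      (lintegral_mono' (Measure.restrict_mono (hBU i) le_rfl) le_rfl)
    exact lintegral_mono' (Measure.restrict_mono (hBU j) le_rfl) le_rfl
  have hadj : ∀ i j : Fin (N+2), dist (η i) (η j) ≤ r₁ → T i j ≤ C := by
    intro i j hij
    rw [hTval i j, hC]
    refine mul_le_mul' (ENNReal.inv_le_inv.2 (hvlow i))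
      (mul_le_mul' (ENNReal.inv_le_inv.2 (hvlow j)) (hIR i j hij))
  -- adjacency of consecutive points
  have hcons : ∀ (k : ℕ) (hk : k + 1 ≤ N + 1),
      dist (η ⟨k, by omega⟩) (η ⟨k + 1, by omega⟩) ≤ r₁ := by
    intro k hk
    have h := hstep ⟨k, by omega⟩
    rw [Fin.succ_mk, Fin.castSucc_mk] at h
    rw [dist_comm]
    exact h
  -- chaining
  have hchain : ∀ (k : ℕ) (h1 : 1 ≤ k) (hk : k ≤ N + 1),
      T ⟨0, by omega⟩ ⟨k, by omega⟩ ^ (1/p) ≤ (k : ℝ≥0∞) * C ^ (1/p) := by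
    intro k
    induction k with
    | zero => omega
    | succ n ih =>
      intro h1 hk
      rcases Nat.eq_zero_or_pos n with hn | hn
      · subst hn
        refine le_trans
          (ENNReal.rpow_le_rpow (hadj _ _ (hcons 0 (by omega))) (by positivity)) ?_
        simp
      · have hkn : n ≤ N + 1 := by omega
        have key := @mink3 _ _ (μ ⟨0, by omega⟩) (μ ⟨n, by omega⟩) (μ ⟨n+1, by omega⟩)
          (hprob _) (hprob _) (hprob _) p hp u hu
        calc T ⟨0, by omega⟩ ⟨n+1, by omega⟩ ^ (1/p)
            ≤ T ⟨0, by omega⟩ ⟨n, by omega⟩ ^ (1/p)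
              + T ⟨n, by omega⟩ ⟨n+1, by omega⟩ ^ (1/p) := key
          _ ≤ (n : ℝ≥0∞) * C ^ (1/p) + C ^ (1/p) := by
              refine add_le_add (ih hn hkn)
                (ENNReal.rpow_le_rpow (hadj _ _ (hcons n hk)) (by positivity))
          _ = ((n+1 : ℕ) : ℝ≥0∞) * C ^ (1/p) := by push_cast; ring
  -- conclude
  have hmain := hchain (N+1) (by omega) le_rfl
  have hT0L : T ⟨0, by omega⟩ ⟨N+1, by omega⟩ ≤ ((N+1 : ℕ) : ℝ≥0∞) ^ p * C := by
    have hrw : T ⟨0, by omega⟩ ⟨N+1, by omega⟩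
        = (T ⟨0, by omega⟩ ⟨N+1, by omega⟩ ^ (1/p)) ^ p := by
      rw [← ENNReal.rpow_mul, one_div_mul_cancel hp0.ne', ENNReal.rpow_one]
    rw [hrw]
    calc (T ⟨0, by omega⟩ ⟨N+1, by omega⟩ ^ (1/p)) ^ p
        ≤ (((N+1 : ℕ) : ℝ≥0∞) * C ^ (1/p)) ^ p := ENNReal.rpow_le_rpow hmain hp0.le
      _ = ((N+1 : ℕ) : ℝ≥0∞) ^ p * C := by
          rw [ENNReal.mul_rpow_of_nonneg _ _ hp0.le, ← ENNReal.rpow_mul,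
            one_div_mul_cancel hp0.ne', ENNReal.rpow_one]
  have hI : (∫⁻ x in B ⟨0, by omega⟩, ∫⁻ y in B ⟨N+1, by omega⟩,
      ENNReal.ofReal (|u x - u y| ^ p))
      = v ⟨0, by omega⟩ * (v ⟨N+1, by omega⟩ * T ⟨0, by omega⟩ ⟨N+1, by omega⟩) := by
    rw [hTval]
    generalize (∫⁻ x in B ⟨0, by omega⟩, ∫⁻ y in B ⟨N+1, by omega⟩,
      ENNReal.ofReal (|u x - u y| ^ p)) = I
    rw [show v ⟨0, by omega⟩ * (v ⟨N+1, by omega⟩ * ((v ⟨0, by omega⟩)⁻¹ * ((v ⟨N+1, by omega⟩)⁻¹ * I)))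
        = (v ⟨0, by omega⟩ * (v ⟨0, by omega⟩)⁻¹) * ((v ⟨N+1, by omega⟩ * (v ⟨N+1, by omega⟩)⁻¹) * I) by ring,
      ENNReal.mul_inv_cancel (hv0 _) (hvt _), ENNReal.mul_inv_cancel (hv0 _) (hvt _), one_mul, one_mul]
  have hfin : (∫⁻ x in B ⟨0, by omega⟩, ∫⁻ y in B ⟨N+1, by omega⟩,
      ENNReal.ofReal (|u x - u y| ^ p))
      ≤ ENNReal.ofReal ((N + 1 : ℝ) ^ p / κ₀ ^ 2) * R := by
    rw [hI]
    calc v ⟨0, by omega⟩ * (v ⟨N+1, by omega⟩ * T ⟨0, by omega⟩ ⟨N+1, by omega⟩)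
        ≤ w * (w * (((N+1 : ℕ) : ℝ≥0∞) ^ p * C)) := by
          exact mul_le_mul' (hvhigh _) (mul_le_mul' (hvhigh _) hT0L)
      _ = ENNReal.ofReal ((N + 1 : ℝ) ^ p / κ₀ ^ 2) * R := by
          have hcoef : ENNReal.ofReal ((N + 1 : ℝ) ^ p / κ₀ ^ 2)
              = ((N+1 : ℕ) : ℝ≥0∞) ^ p * (κ⁻¹ * κ⁻¹) := by
            have hNcast : ENNReal.ofReal ((N:ℝ) + 1) = ((N+1:ℕ) : ℝ≥0∞) := by
              rw [ENNReal.ofReal_add (Nat.cast_nonneg N) zero_le_one,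
                ENNReal.ofReal_natCast, ENNReal.ofReal_one]
              push_cast; ring
            rw [ENNReal.ofReal_div_of_pos (by positivity), hκ']
            rw [← ENNReal.ofReal_rpow_of_nonneg (by positivity) hp0.le, hNcast]
            rw [ENNReal.ofReal_pow hκ.le]
            rw [div_eq_mul_inv, sq, ENNReal.mul_inv (Or.inl hκ0) (Or.inl hκt)]
          rw [hcoef, hC, ENNReal.mul_inv (Or.inl hκ0) (Or.inl hκt)]
          rw [show w * (w * (((N+1 : ℕ) : ℝ≥0∞) ^ p * (κ⁻¹ * w⁻¹ * (κ⁻¹ * w⁻¹ * R))))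
              = (w * w⁻¹) * ((w * w⁻¹) * (((N+1 : ℕ) : ℝ≥0∞) ^ p * ((κ⁻¹ * κ⁻¹) * R))) by ring,
            ENNReal.mul_inv_cancel hw0 hwt]
          ring
  calc (∫⁻ x in M ∩ Metric.ball (η 0) r₀,
      ∫⁻ y in M ∩ Metric.ball (η (Fin.last (N + 1))) r₀,
        ENNReal.ofReal (|u x - u y| ^ p))
      = ∫⁻ x in B ⟨0, by omega⟩, ∫⁻ y in B ⟨N+1, by omega⟩,
        ENNReal.ofReal (|u x - u y| ^ p) := rfl
    _ ≤ ENNReal.ofReal ((N + 1 : ℝ) ^ p / κ₀ ^ 2) * R := hfin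


/-- chaining estimate along a discrete path in a set with uniform density. -/
theorem stmt_3 {d : ℕ} (M : Set (EuclideanSpace ℝ (Fin d))) (hM : MeasurableSet M)
    (p : ℝ) (hp : 1 ≤ p) (κ₀ r₀ r₁ : ℝ) (hκ : 0 < κ₀) (hr₀ : 0 < r₀) (hr₁ : 0 < r₁)
    (hdens : ∀ η ∈ M, ENNReal.ofReal κ₀ * volume (Metric.ball η r₀)
      ≤ volume (M ∩ Metric.ball η r₀))
    (N : ℕ) (η : Fin (N + 2) → EuclideanSpace ℝ (Fin d))
    (hηM : ∀ i, η i ∈ M)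
    (hstep : ∀ i : Fin (N + 1), dist (η i.succ) (η i.castSucc) ≤ r₁)
    (u : EuclideanSpace ℝ (Fin d) → ℝ)
    (hu : MemLp u (ENNReal.ofReal p) (volume.restrict M)) :
    ∫⁻ x in M ∩ Metric.ball (η 0) r₀,
      ∫⁻ y in M ∩ Metric.ball (η (Fin.last (N + 1))) r₀,
        ENNReal.ofReal (|u x - u y| ^ p)
    ≤ ENNReal.ofReal ((N + 1 : ℝ) ^ p / κ₀ ^ 2) *
      ∫⁻ x in M ∩ ⋃ i, Metric.ball (η i) r₀,
        ∫⁻ y in M ∩ ⋃ i, Metric.ball (η i) r₀,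
          if dist x y ≤ 2 * r₀ + r₁ then ENNReal.ofReal (|u x - u y| ^ p) else 0 := by
  set g : EuclideanSpace ℝ (Fin d) → ℝ := hu.1.mk u with hg
  have hgm : Measurable g := hu.1.stronglyMeasurable_mk.measurable
  have hae : u =ᵐ[volume.restrict M] g := hu.1.ae_eq_mk
  have hres : ∀ S : Set (EuclideanSpace ℝ (Fin d)), S ⊆ M →
      u =ᵐ[volume.restrict S] g := fun S hS =>
    ae_restrict_of_ae_restrict_of_subset hS hae
  have hL : (∫⁻ x in M ∩ Metric.ball (η 0) r₀,
      ∫⁻ y in M ∩ Metric.ball (η (Fin.last (N + 1))) r₀,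
        ENNReal.ofReal (|u x - u y| ^ p))
      = ∫⁻ x in M ∩ Metric.ball (η 0) r₀,
      ∫⁻ y in M ∩ Metric.ball (η (Fin.last (N + 1))) r₀,
        ENNReal.ofReal (|g x - g y| ^ p) := by
    apply lintegral_congr_ae
    filter_upwards [hres _ Set.inter_subset_left] with x hx
    apply lintegral_congr_ae
    filter_upwards [hres _ Set.inter_subset_left] with y hy
    rw [hx, hy]
  have hR : (∫⁻ x in M ∩ ⋃ i, Metric.ball (η i) r₀,
      ∫⁻ y in M ∩ ⋃ i, Metric.ball (η i) r₀,
        if dist x y ≤ 2 * r₀ + r₁ then ENNReal.ofReal (|u x - u y| ^ p) else 0)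
      = ∫⁻ x in M ∩ ⋃ i, Metric.ball (η i) r₀,
      ∫⁻ y in M ∩ ⋃ i, Metric.ball (η i) r₀,
        if dist x y ≤ 2 * r₀ + r₁ then ENNReal.ofReal (|g x - g y| ^ p) else 0 := by
    apply lintegral_congr_ae
    filter_upwards [hres _ Set.inter_subset_left] with x hx
    apply lintegral_congr_ae
    filter_upwards [hres _ Set.inter_subset_left] with y hy
    rw [hx, hy]
  rw [hL, hR]
  exact stmt3_meas M hM p hp κ₀ r₀ r₁ hκ hr₀ hr₁ hdens N η hηM hstep g hgm
end

section
/- Let A be a nonnegative self-adjoint bounded operator on L^2(Y_soft) with spectral resolution E_s, let μ be the finite positive measure μ(B) = (E(B) 1_{Y_soft}, 1_{Y_soft}), with support L ⊂ Sp(A), and define β(λ) = λ + λ² ∫_L (s − λ)^{-1} dμ(s) for λ ∉ L. Then β is differentiable on its domain and β'(λ) ≥ 1 − μ(L) for all λ ∉ L. -/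
open MeasureTheory ENNReal Metric

/-- the Zhikov β-function is differentiable off the support `L` of the spectral
measure `μ`, with derivative at least `1 - μ(L)`. -/
theorem stmt_7 (μ : Measure ℝ) [IsFiniteMeasure μ] (L : Set ℝ)
    (hL_cpt : IsCompact L) (hL_nonneg : L ⊆ Set.Ici 0) (hsupp : μ Lᶜ = 0) :
    ∀ lam : ℝ, lam ∉ L →
      ∃ b : ℝ,
        HasDerivAt (fun t : ℝ => t + t ^ 2 * ∫ s in L, (s - t)⁻¹ ∂μ) b lam ∧
        1 - (μ L).toReal ≤ b := by
  intro lam hlam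
  have hLmeas : MeasurableSet L := hL_cpt.isClosed.measurableSet
  -- separation
  obtain ⟨ε, hε, hball⟩ : ∃ ε > 0, ball lam ε ⊆ Lᶜ :=
    Metric.isOpen_iff.mp hL_cpt.isClosed.isOpen_compl lam hlam
  have hsep : ∀ s ∈ L, ∀ x ∈ ball lam (ε / 2), ε / 2 ≤ |s - x| := by
    intro s hs x hx
    have h1 : ε ≤ |s - lam| := by
      by_contra h
      push_neg at h
      exact hball (by simpa [Real.dist_eq, abs_sub_comm] using h) hs
    have h2 : |x - lam| < ε / 2 := by simpa [Real.dist_eq] using hx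
    have := abs_sub_abs_le_abs_sub (s - lam) (x - lam)
    have h3 : |(s - lam) - (x - lam)| = |s - x| := by ring_nf
    linarith [abs_sub_abs_le_abs_sub (s - lam) (x - lam), h3 ▸ this]
  -- bound on s
  obtain ⟨R, hR⟩ : ∃ R, L ⊆ closedBall 0 R := hL_cpt.isBounded.subset_closedBall 0
  set ν := μ.restrict L with hν
  set F : ℝ → ℝ → ℝ := fun t s => t ^ 2 * (s - t)⁻¹ with hF
  set F' : ℝ → ℝ → ℝ := fun t s => 2 * t * (s - t)⁻¹ + t ^ 2 * ((s - t)⁻¹) ^ 2 with hF'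
  set M : ℝ := |lam| + ε / 2 with hM
  set C : ℝ := 2 * M * (2 / ε) + M ^ 2 * (2 / ε) ^ 2 with hC
  have hmeasF : ∀ t : ℝ, AEStronglyMeasurable (F t) ν := fun t =>
    ((measurable_id.sub_const t).inv.const_mul _).aestronglyMeasurable
  have hmeasF' : AEStronglyMeasurable (F' lam) ν := by
    apply Measurable.aestronglyMeasurable
    exact (((measurable_id.sub_const lam).inv.const_mul _).add
      (((measurable_id.sub_const lam).inv.pow_const 2).const_mul _))
  have haemem : ∀ᵐ s ∂ν, s ∈ L := ae_restrict_mem hLmeas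
  have hinv_le : ∀ s ∈ L, ∀ x ∈ ball lam (ε / 2), |(s - x)⁻¹| ≤ 2 / ε := by
    intro s hs x hx
    rw [abs_inv]
    have h := hsep s hs x hx
    have h2 : (0:ℝ) < ε / 2 := by linarith
    rw [inv_le_comm₀ (lt_of_lt_of_le h2 h) (by positivity)]
    calc ((2:ℝ) / ε)⁻¹ = ε / 2 := by field_simp
    _ ≤ |s - x| := h
  -- integrability of F lam
  have hFint : Integrable (F lam) ν := by
    refine Integrable.mono' (integrable_const (lam ^ 2 * (2 / ε))) (hmeasF lam) ?_
    filter_upwards [haemem] with s hs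
    have hin : lam ∈ ball lam (ε / 2) := mem_ball_self (by linarith)
    have := hinv_le s hs lam hin
    calc ‖F lam s‖ = |lam ^ 2| * |(s - lam)⁻¹| := by rw [Real.norm_eq_abs, hF, abs_mul]
    _ ≤ lam ^ 2 * (2 / ε) := by
          rw [abs_of_nonneg (sq_nonneg lam)]
          exact mul_le_mul_of_nonneg_left this (sq_nonneg lam)
  -- derivative bound
  have h_bound : ∀ᵐ s ∂ν, ∀ x ∈ ball lam (ε / 2), ‖F' x s‖ ≤ C := by
    filter_upwards [haemem] with s hs x hx
    have hxM : |x| ≤ M := by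
      have h2 : |x - lam| < ε / 2 := by simpa [Real.dist_eq] using hx
      have := abs_sub_abs_le_abs_sub x lam
      rw [hM]; linarith
    have hi := hinv_le s hs x hx
    have hi0 : (0:ℝ) ≤ 2 / ε := by positivity
    have hM0 : (0:ℝ) ≤ M := le_trans (abs_nonneg x) hxM
    calc ‖F' x s‖ ≤ |2 * x * (s - x)⁻¹| + |x ^ 2 * ((s - x)⁻¹) ^ 2| := abs_add_le _ _
    _ = 2 * |x| * |(s - x)⁻¹| + |x| ^ 2 * |(s - x)⁻¹| ^ 2 := by
        rw [abs_mul, abs_mul, abs_mul, abs_two, abs_pow, abs_pow]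
    _ ≤ 2 * M * (2 / ε) + M ^ 2 * (2 / ε) ^ 2 := by
        have hax := abs_nonneg x
        have hai := abs_nonneg (s - x)⁻¹
        gcongr
  -- differentiability
  have h_diff : ∀ᵐ s ∂ν, ∀ x ∈ ball lam (ε / 2), HasDerivAt (fun t => F t s) (F' x s) x := by
    filter_upwards [haemem] with s hs x hx
    have hne : s - x ≠ 0 := by
      have := hsep s hs x hx
      intro h; rw [h] at this; simp at this; linarith
    have h1 : HasDerivAt (fun t : ℝ => s - t) (-1) x := by
      simpa using (hasDerivAt_id x).const_sub s
    have h2 : HasDerivAt (fun t : ℝ => (s - t)⁻¹) (-(-1) / (s - x) ^ 2) x := h1.inv hne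
    have h3 : HasDerivAt (fun t => F t s) (((2:ℕ):ℝ) * x ^ (2 - 1) * (s - x)⁻¹ + x ^ 2 * (-(-1) / (s - x) ^ 2)) x :=
      (hasDerivAt_pow 2 x).mul h2
    convert h3 using 1
    simp only [hF']
    field_simp
    try ring
  have key := hasDerivAt_integral_of_dominated_loc_of_deriv_le (μ := ν) (F := F) (F' := F')
      (bound := fun _ => C) (ball_mem_nhds lam (by linarith : (0:ℝ) < ε / 2))
      (Filter.Eventually.of_forall hmeasF) hFint hmeasF' h_bound (integrable_const C) h_diff
  obtain ⟨hF'int, hderiv⟩ := key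
  refine ⟨1 + ∫ s, F' lam s ∂ν, ?_, ?_⟩
  · have := (hasDerivAt_id lam).add hderiv
    simp only [F] at this
    simp only [← integral_const_mul]
    exact this
  · -- pointwise: F' lam s + 1 = (s * (s - lam)⁻¹)^2 ≥ 0
    have hle : ∀ᵐ s ∂ν, (fun _ => (-1 : ℝ)) s ≤ F' lam s := by
      filter_upwards [haemem] with s hs
      have hne : s - lam ≠ 0 := by
        have := hsep s hs lam (mem_ball_self (by linarith))
        intro h; rw [h] at this; simp at this; linarith
      have hid : F' lam s + 1 = (s * (s - lam)⁻¹) ^ 2 := by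
        rw [hF']; field_simp; ring
      have h0 := sq_nonneg (s * (s - lam)⁻¹)
      simp only [hF'] at hid ⊢
      nlinarith [h0, hid]
    have hint := integral_mono_ae (integrable_const (-1 : ℝ)) hF'int hle
    have hconst : ∫ _ : ℝ, (-1 : ℝ) ∂ν = -(μ L).toReal := by
      rw [integral_const]
      simp [ν, Measure.restrict_apply_univ, smul_eq_mul, measureReal_def]
    rw [hconst] at hint
    linarith
end

section
/- With the notation of the previous statement, suppose λ_0 ∈ L satisfies μ({λ_0}) > 0 and (λ_0 − δ, λ_0) ∩ L = ∅ for some δ > 0, and λ_0 ≠ 0. Then β(λ) → +∞ as λ → λ_0 from the left. -/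
open MeasureTheory ENNReal

/-- the Zhikov β-function blows up to `+∞` at an atom `lam₀` of the spectral
measure approached from the left through a gap of the support. -/
theorem stmt_8 (μ : Measure ℝ) [IsFiniteMeasure μ] (L : Set ℝ)
    (hL_cpt : IsCompact L) (hL_nonneg : L ⊆ Set.Ici 0) (hsupp : μ Lᶜ = 0)
    (lam₀ δ : ℝ) (hlam₀ : lam₀ ∈ L) (hlam₀ne : lam₀ ≠ 0) (hδ : 0 < δ)
    (hatom : 0 < μ {lam₀}) (hgap : Set.Ioo (lam₀ - δ) lam₀ ∩ L = ∅) :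
    Filter.Tendsto (fun t : ℝ => t + t ^ 2 * ∫ s in L, (s - t)⁻¹ ∂μ)
      (nhdsWithin lam₀ (Set.Ioo (lam₀ - δ) lam₀)) Filter.atTop := by
  have hlam₀pos : 0 < lam₀ := lt_of_le_of_ne (hL_nonneg hlam₀) (Ne.symm hlam₀ne)
  set δ' : ℝ := min (δ / 2) (lam₀ / 2) with hδ'def
  have hδ'pos : 0 < δ' := lt_min (by linarith) (by linarith)
  have hδ'le : δ' ≤ δ / 2 := min_le_left _ _
  have hδ'le2 : δ' ≤ lam₀ / 2 := min_le_right _ _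
  -- a.e. membership in L
  have hae : ∀ᵐ s ∂μ, s ∈ L := by
    rw [Filter.eventually_iff, mem_ae_iff]
    simpa using hsupp
  have hrestr : μ.restrict L = μ := Measure.restrict_eq_self_of_ae_mem hae
  -- structure of L
  have hLstruct : ∀ s ∈ L, s ≤ lam₀ - δ ∨ lam₀ ≤ s := by
    intro s hs
    by_contra h
    push_neg at h
    exact Set.eq_empty_iff_forall_notMem.1 hgap s ⟨⟨h.1, h.2⟩, hs⟩
  set a : ℝ := (μ {lam₀}).toReal with hadef
  have hapos : 0 < a := ENNReal.toReal_pos hatom.ne' (measure_ne_top μ _)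
  set C : ℝ := (2 / δ) * (μ Set.univ).toReal with hCdef
  have hCnn : 0 ≤ C := by
    apply mul_nonneg (by positivity) ENNReal.toReal_nonneg
  -- key lower bound for the integral
  have key : ∀ t ∈ Set.Ioo (lam₀ - δ') lam₀,
      a * (lam₀ - t)⁻¹ - C ≤ ∫ s in L, (s - t)⁻¹ ∂μ := by
    intro t ht
    obtain ⟨ht1, ht2⟩ := ht
    have htgap : lam₀ - δ < t := by
      have : lam₀ - δ ≤ lam₀ - δ' - δ' := by linarith
      linarith
    have htc : δ / 2 ≤ t - (lam₀ - δ) := by linarith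
    have htcpos : (0:ℝ) < t - (lam₀ - δ) := by linarith
    -- integrability
    have hmeas : Measurable fun s : ℝ => (s - t)⁻¹ :=
      (measurable_id.sub_const t).inv
    have hint : Integrable (fun s : ℝ => (s - t)⁻¹) μ := by
      refine Integrable.mono' (integrable_const (max (t - (lam₀ - δ))⁻¹ (lam₀ - t)⁻¹))
        hmeas.aestronglyMeasurable ?_
      filter_upwards [hae] with s hs
      rcases hLstruct s hs with h | h
      · have h1 : t - (lam₀ - δ) ≤ t - s := by linarith
        have : |(s - t)⁻¹| = (t - s)⁻¹ := by
          rw [abs_inv, abs_of_neg (by linarith : s - t < 0)]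
          ring_nf
        rw [Real.norm_eq_abs, this]
        exact le_max_of_le_left (inv_anti₀ htcpos h1)
      · have h1 : lam₀ - t ≤ s - t := by linarith
        have h2 : (0:ℝ) < lam₀ - t := by linarith
        rw [Real.norm_eq_abs, abs_of_nonneg (inv_nonneg.2 (by linarith))]
        exact le_max_of_le_right (inv_anti₀ h2 h1)
    rw [hrestr]
    have hsplit := integral_add_compl (measurableSet_Iic (a := lam₀ - δ))
      hint
    rw [← hsplit]
    have hb1 : -C ≤ ∫ s in Set.Iic (lam₀ - δ), (s - t)⁻¹ ∂μ := by
      have : ∫ s in Set.Iic (lam₀ - δ), (-(2/δ)) ∂μ ≤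
          ∫ s in Set.Iic (lam₀ - δ), (s - t)⁻¹ ∂μ := by
        apply setIntegral_mono_on (integrable_const _).integrableOn
          hint.integrableOn measurableSet_Iic
        intro s hs
        have hs' : s ≤ lam₀ - δ := hs
        have h1 : δ / 2 ≤ t - s := by linarith
        have h2 : (0:ℝ) < t - s := by linarith
        have h3 : (t - s)⁻¹ ≤ (δ/2)⁻¹ := inv_anti₀ (by linarith) h1
        have h4 : (s - t)⁻¹ = -(t - s)⁻¹ := by
          rw [← inv_neg]; ring_nf
        rw [h4]
        have : (δ/2)⁻¹ = 2/δ := by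
          field_simp
        linarith [h3, this ▸ h3]
      refine le_trans ?_ this
      rw [setIntegral_const]
      rw [smul_eq_mul, hCdef]
      have hmono : μ.real (Set.Iic (lam₀ - δ)) ≤ (μ Set.univ).toReal :=
        ENNReal.toReal_mono (measure_ne_top μ _) (measure_mono (Set.subset_univ _))
      nlinarith [mul_le_mul_of_nonneg_right hmono (show (0:ℝ) ≤ 2/δ by positivity)]
    have hb2 : a * (lam₀ - t)⁻¹ ≤ ∫ s in (Set.Iic (lam₀ - δ))ᶜ, (s - t)⁻¹ ∂μ := by
      have hsub : ({lam₀} : Set ℝ) ≤ᵐ[μ] ((Set.Iic (lam₀ - δ))ᶜ : Set ℝ) := by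
        apply HasSubset.Subset.eventuallyLE
        intro s hs
        simp only [Set.mem_singleton_iff] at hs
        simp only [Set.mem_compl_iff, Set.mem_Iic, not_le, hs]
        linarith
      have hnn : 0 ≤ᵐ[μ.restrict (Set.Iic (lam₀ - δ))ᶜ] fun s : ℝ => (s - t)⁻¹ := by
        filter_upwards [ae_restrict_of_ae hae,
          ae_restrict_mem measurableSet_Iic.compl] with s hs hs'
        rcases hLstruct s hs with h | h
        · exact absurd h (by simpa [Set.mem_compl_iff, Set.mem_Iic, not_le] using hs')
        · exact inv_nonneg.2 (by linarith)
      have := setIntegral_mono_set hint.integrableOn hnn hsub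
      refine le_trans ?_ this
      rw [integral_singleton]
      rw [smul_eq_mul]
      exact le_rfl
    linarith
  -- the minorant tends to atTop
  have hmin : Filter.Tendsto
      (fun t : ℝ => (lam₀ - δ') + ((lam₀^2/4) * a * (lam₀ - t)⁻¹ - lam₀^2 * C))
      (nhdsWithin lam₀ (Set.Ioo (lam₀ - δ) lam₀)) Filter.atTop := by
    have h1 : Filter.Tendsto (fun t : ℝ => (lam₀ - t)⁻¹)
        (nhdsWithin lam₀ (Set.Ioo (lam₀ - δ) lam₀)) Filter.atTop := by
      apply tendsto_inv_nhdsGT_zero.comp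
      apply tendsto_nhdsWithin_of_tendsto_nhds_of_eventually_within
      · have h0 : Filter.Tendsto (fun t : ℝ => lam₀ - t) (nhds lam₀) (nhds (lam₀ - lam₀)) :=
          (continuous_const.sub continuous_id).tendsto lam₀
        simpa using h0.mono_left nhdsWithin_le_nhds
      · filter_upwards [self_mem_nhdsWithin] with t ht
        simp only [Set.mem_Ioi]
        linarith [ht.2]
    have h2 : Filter.Tendsto (fun t : ℝ => (lam₀^2/4) * a * (lam₀ - t)⁻¹)
        (nhdsWithin lam₀ (Set.Ioo (lam₀ - δ) lam₀)) Filter.atTop :=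
      h1.const_mul_atTop (by positivity)
    have h3 := Filter.tendsto_atTop_add_const_right _ (-(lam₀^2 * C)) h2
    have h4 := Filter.tendsto_atTop_add_const_left _ (lam₀ - δ') h3
    convert h4 using 2 with t
    ring
  -- conclude by comparison
  apply Filter.tendsto_atTop_mono' _ _ hmin
  have hnear : ∀ᶠ t in nhdsWithin lam₀ (Set.Ioo (lam₀ - δ) lam₀),
      t ∈ Set.Ioo (lam₀ - δ') lam₀ := by
    have h1 : ∀ᶠ t in nhds lam₀, lam₀ - δ' < t :=
      eventually_gt_nhds (by linarith)
    filter_upwards [h1.filter_mono nhdsWithin_le_nhds, self_mem_nhdsWithin] with t h h'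
    exact ⟨h, h'.2⟩
  filter_upwards [hnear] with t ht
  obtain ⟨ht1, ht2⟩ := ht
  have httpos : lam₀ / 2 < t := by linarith
  have ht2sq : lam₀^2/4 ≤ t^2 := by nlinarith
  have ht2sq' : t^2 ≤ lam₀^2 := by nlinarith
  have hkey := key t ⟨ht1, ht2⟩
  have hinvnn : 0 ≤ (lam₀ - t)⁻¹ := inv_nonneg.2 (by linarith)
  have hstep : t^2 * (a * (lam₀ - t)⁻¹ - C) ≤ t^2 * ∫ s in L, (s - t)⁻¹ ∂μ :=
    mul_le_mul_of_nonneg_left hkey (by positivity)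
  have hstep2 : (lam₀^2/4) * a * (lam₀ - t)⁻¹ - lam₀^2 * C ≤
      t^2 * (a * (lam₀ - t)⁻¹ - C) := by
    have e1 : (lam₀^2/4) * (a * (lam₀ - t)⁻¹) ≤ t^2 * (a * (lam₀ - t)⁻¹) :=
      mul_le_mul_of_nonneg_right ht2sq (by positivity)
    have e2 : t^2 * C ≤ lam₀^2 * C := mul_le_mul_of_nonneg_right ht2sq' hCnn
    nlinarith
  have : lam₀ - δ' ≤ t := le_of_lt ht1
  linarith
end

section
/- Let u, f ∈ L^2(R^d), both nonzero, and let L > 0. Then there exists ζ ∈ L·Z^d such that ‖u‖_{L^2(□^{4L}_ζ)} ≤ √(4^d + 2^d) ‖u‖_{L^2(□^L_ζ)}, ‖f‖_{L^2(□^{2L}_ζ)}/‖f‖_{L^2} ≤ √(4^d + 2^d) ‖u‖_{L^2(□^L_ζ)}/‖u‖_{L^2}, and ‖u‖_{L^2(□^L_ζ)} ≠ 0, where □^m_ζ := [ζ − m, ζ + m]^d. -/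
open MeasureTheory ENNReal

namespace Stmt9Aux

variable {d : ℕ}

lemma cube_measurable (c : Fin d → ℝ) (m : ℝ) :
    MeasurableSet {y : Fin d → ℝ | ∀ i, |y i - c i| ≤ m} := by
  have h : {y : Fin d → ℝ | ∀ i, |y i - c i| ≤ m}
      = ⋂ i, {y : Fin d → ℝ | |y i - c i| ≤ m} := by
    ext y; simp
  rw [h]
  refine MeasurableSet.iInter fun i => ?_
  exact measurableSet_le (((measurable_pi_apply i).sub measurable_const).abs) measurable_const

lemma count_ae (L : ℝ) (hL : 0 < L) (k : ℕ) :
    ∀ᵐ x : (Fin d → ℝ), ∑' z : Fin d → ℤ,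
      Set.indicator {y : Fin d → ℝ | ∀ i, |y i - L * (z i : ℝ)| ≤ (k : ℝ) * L}
        (fun _ => (1 : ℝ≥0∞)) x = (((2 * k) ^ d : ℕ) : ℝ≥0∞) := by
  classical
  have hnull : volume (⋃ i : Fin d, ⋃ n : ℤ, {x : Fin d → ℝ | x i = L * n}) = 0 := by
    refine measure_iUnion_null fun i => measure_iUnion_null fun n => ?_
    have := Measure.pi_hyperplane (fun _ : Fin d => (volume : Measure ℝ)) i (L * n)
    simpa [← volume_pi] using this
  filter_upwards [measure_eq_zero_iff_ae_notMem.mp hnull] with x hx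
  have hxi : ∀ i : Fin d, ∀ n : ℤ, x i ≠ L * n := by
    intro i n h
    exact hx (Set.mem_iUnion.mpr ⟨i, Set.mem_iUnion.mpr ⟨n, h⟩⟩)
  set t : Fin d → ℝ := fun i => x i / L with ht
  have hxt : ∀ i, x i = L * t i := by
    intro i; show x i = L * (x i / L); field_simp
  have htne : ∀ i : Fin d, ∀ n : ℤ, t i ≠ (n : ℝ) := by
    intro i n h
    exact hxi i n (by rw [hxt i, h])
  have hceil : ∀ i, ⌈t i⌉ = ⌊t i⌋ + 1 := by
    intro i
    have h1 : ((⌊t i⌋ : ℝ)) < t i :=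
      lt_of_le_of_ne (Int.floor_le _) fun h => htne i ⌊t i⌋ h.symm
    have h2 : (⌊t i⌋ : ℤ) < ⌈t i⌉ := by
      have := h1.trans_le (Int.le_ceil (t i))
      exact_mod_cast this
    have h3 := Int.ceil_le_floor_add_one (t i)
    omega
  set T : Finset (Fin d → ℤ) :=
    Fintype.piFinset fun i => Finset.Icc (⌈t i - k⌉) (⌊t i + k⌋) with hT
  have hmem : ∀ z : Fin d → ℤ,
      z ∈ T ↔ x ∈ {y : Fin d → ℝ | ∀ i, |y i - L * (z i : ℝ)| ≤ (k : ℝ) * L} := by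
    intro z
    rw [hT, Fintype.mem_piFinset, Set.mem_setOf_eq]
    refine forall_congr' fun i => ?_
    rw [Finset.mem_Icc, Int.ceil_le, Int.le_floor, abs_le]
    constructor
    · rintro ⟨h1, h2⟩
      constructor
      · nlinarith [hxt i, h1, hL]
      · nlinarith [hxt i, h2, hL]
    · rintro ⟨h1, h2⟩
      constructor
      · nlinarith [hxt i, h2, hL]
      · nlinarith [hxt i, h1, hL]
  rw [tsum_eq_sum (s := T) (fun z hz => Set.indicator_of_notMem
      (fun hm => hz ((hmem z).mpr hm)) _)]
  have hsum : ∑ z ∈ T, Set.indicator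
      {y : Fin d → ℝ | ∀ i, |y i - L * (z i : ℝ)| ≤ (k : ℝ) * L}
      (fun _ => (1 : ℝ≥0∞)) x = (T.card : ℝ≥0∞) := by
    rw [Finset.card_eq_sum_ones T]
    push_cast
    refine Finset.sum_congr rfl fun z hz => ?_
    rw [Set.indicator_of_mem ((hmem z).mp hz)]
  rw [hsum]
  congr 1
  rw [hT, Fintype.card_piFinset]
  have hc : ∀ i : Fin d, (Finset.Icc (⌈t i - k⌉) (⌊t i + k⌋)).card = 2 * k := by
    intro i
    rw [Int.card_Icc, Int.floor_add_natCast, Int.ceil_sub_natCast, hceil i]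
    omega
  rw [Finset.prod_congr rfl fun i _ => hc i, Finset.prod_const, Finset.card_univ,
    Fintype.card_fin]

lemma sum_cubes (L : ℝ) (hL : 0 < L) (k : ℕ) (g : (Fin d → ℝ) → ℝ≥0∞)
    (hg : AEMeasurable g volume) :
    ∑' z : Fin d → ℤ,
        ∫⁻ x in {y : Fin d → ℝ | ∀ i, |y i - L * (z i : ℝ)| ≤ (k : ℝ) * L}, g x
      = (((2 * k) ^ d : ℕ) : ℝ≥0∞) * ∫⁻ x, g x := by
  have hms : ∀ z : Fin d → ℤ,
      MeasurableSet {y : Fin d → ℝ | ∀ i, |y i - L * (z i : ℝ)| ≤ (k : ℝ) * L} :=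
    fun z => cube_measurable _ _
  calc ∑' z : Fin d → ℤ,
          ∫⁻ x in {y : Fin d → ℝ | ∀ i, |y i - L * (z i : ℝ)| ≤ (k : ℝ) * L}, g x
      = ∑' z : Fin d → ℤ, ∫⁻ x, Set.indicator
          {y : Fin d → ℝ | ∀ i, |y i - L * (z i : ℝ)| ≤ (k : ℝ) * L} g x := by
        exact tsum_congr fun z => (lintegral_indicator (hms z) g).symm
    _ = ∫⁻ x, ∑' z : Fin d → ℤ, Set.indicator
          {y : Fin d → ℝ | ∀ i, |y i - L * (z i : ℝ)| ≤ (k : ℝ) * L} g x :=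
        (lintegral_tsum fun z => (hg.indicator (hms z))).symm
    _ = ∫⁻ x, g x * ∑' z : Fin d → ℤ, Set.indicator
          {y : Fin d → ℝ | ∀ i, |y i - L * (z i : ℝ)| ≤ (k : ℝ) * L}
          (fun _ => (1 : ℝ≥0∞)) x := by
        refine lintegral_congr fun x => ?_
        rw [← ENNReal.tsum_mul_left]
        refine tsum_congr fun z => ?_
        by_cases h : x ∈ {y : Fin d → ℝ | ∀ i, |y i - L * (z i : ℝ)| ≤ (k : ℝ) * L} <;>
          simp [h]
    _ = ∫⁻ x, g x * (((2 * k) ^ d : ℕ) : ℝ≥0∞) := by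
        refine lintegral_congr_ae ?_
        filter_upwards [count_ae L hL k] with x hx
        rw [hx]
    _ = (((2 * k) ^ d : ℕ) : ℝ≥0∞) * ∫⁻ x, g x := by
        rw [lintegral_mul_const' _ _ (ENNReal.natCast_ne_top _), mul_comm]

lemma hsqrtC (d : ℕ) :
    ENNReal.ofReal (Real.sqrt (4 ^ d + 2 ^ d)) = ((4 : ℝ≥0∞) ^ d + 2 ^ d) ^ (1 / 2 : ℝ) := by
  have hs : (0 : ℝ) < 4 ^ d + 2 ^ d := by positivity
  rw [Real.sqrt_eq_rpow, ← ENNReal.ofReal_rpow_of_pos hs]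
  congr 1
  rw [ENNReal.ofReal_add (by positivity) (by positivity),
    ENNReal.ofReal_pow (by norm_num), ENNReal.ofReal_pow (by norm_num),
    ENNReal.ofReal_ofNat, ENNReal.ofReal_ofNat]

lemma eLp2 {α : Type*} [MeasurableSpace α] (μ : Measure α) (g : α → ℝ) :
    eLpNorm g 2 μ = (∫⁻ x, ((‖g x‖₊ : ℝ≥0∞)) ^ 2 ∂μ) ^ (1 / 2 : ℝ) := by
  rw [eLpNorm_eq_lintegral_rpow_enorm_toReal (by norm_num) (by norm_num)]
  norm_num [ENNReal.rpow_two]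
  rfl

end Stmt9Aux


/-- pigeonhole choice of a good cube `□ᵐ_ζ = ζ + [-m,m]^d`, `ζ ∈ L·ℤ^d`. -/
theorem stmt_9 {d : ℕ} (u f : (Fin d → ℝ) → ℝ)
    (hu : MemLp u 2 volume) (hf : MemLp f 2 volume)
    (hu0 : ¬ u =ᵐ[volume] 0) (hf0 : ¬ f =ᵐ[volume] 0)
    (L : ℝ) (hL : 0 < L) :
    ∃ z : Fin d → ℤ,
      let ζ : Fin d → ℝ := fun i => L * (z i : ℝ)
      let cube : ℝ → Set (Fin d → ℝ) := fun m => {x | ∀ i, |x i - ζ i| ≤ m}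
      eLpNorm u 2 (volume.restrict (cube (4 * L)))
          ≤ ENNReal.ofReal (Real.sqrt (4 ^ d + 2 ^ d)) *
            eLpNorm u 2 (volume.restrict (cube L)) ∧
      eLpNorm f 2 (volume.restrict (cube (2 * L))) * eLpNorm u 2 volume
          ≤ ENNReal.ofReal (Real.sqrt (4 ^ d + 2 ^ d)) *
            (eLpNorm u 2 (volume.restrict (cube L)) * eLpNorm f 2 volume) ∧
      eLpNorm u 2 (volume.restrict (cube L)) ≠ 0 := by
  classical
  open Stmt9Aux in
  set G : (Fin d → ℝ) → ℝ≥0∞ := fun x => ((‖u x‖₊ : ℝ≥0∞)) ^ 2 with hGdef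
  set H : (Fin d → ℝ) → ℝ≥0∞ := fun x => ((‖f x‖₊ : ℝ≥0∞)) ^ 2 with hHdef
  have hGm : AEMeasurable G volume := hu.1.enorm.pow_const 2
  have hHm : AEMeasurable H volume := hf.1.enorm.pow_const 2
  set U : ℝ≥0∞ := ∫⁻ x, G x with hUdef
  set F : ℝ≥0∞ := ∫⁻ x, H x with hFdef
  -- finiteness and nonvanishing
  have heu : eLpNorm u 2 volume = U ^ (1 / 2 : ℝ) := Stmt9Aux.eLp2 volume u
  have hef : eLpNorm f 2 volume = F ^ (1 / 2 : ℝ) := Stmt9Aux.eLp2 volume f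
  have hUtop : U ≠ ⊤ := by
    intro h
    have := hu.2
    rw [heu, h, ENNReal.top_rpow_of_pos (by norm_num)] at this
    exact (lt_irrefl _ this)
  have hFtop : F ≠ ⊤ := by
    intro h
    have := hf.2
    rw [hef, h, ENNReal.top_rpow_of_pos (by norm_num)] at this
    exact (lt_irrefl _ this)
  have hU0 : U ≠ 0 := by
    intro h
    have he : eLpNorm u 2 volume = 0 := by
      rw [heu, h, ENNReal.zero_rpow_of_pos (by norm_num)]
    exact hu0 ((eLpNorm_eq_zero_iff hu.1 (by norm_num)).mp he)
  have hF0 : F ≠ 0 := by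
    intro h
    have he : eLpNorm f 2 volume = 0 := by
      rw [hef, h, ENNReal.zero_rpow_of_pos (by norm_num)]
    exact hf0 ((eLpNorm_eq_zero_iff hf.1 (by norm_num)).mp he)
  -- cube integrals
  set A : (Fin d → ℤ) → ℝ≥0∞ :=
    fun z => ∫⁻ x in {y : Fin d → ℝ | ∀ i, |y i - L * (z i : ℝ)| ≤ L}, G x with hAdef
  set B : (Fin d → ℤ) → ℝ≥0∞ :=
    fun z => ∫⁻ x in {y : Fin d → ℝ | ∀ i, |y i - L * (z i : ℝ)| ≤ 4 * L}, G x with hBdef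
  set D : (Fin d → ℤ) → ℝ≥0∞ :=
    fun z => ∫⁻ x in {y : Fin d → ℝ | ∀ i, |y i - L * (z i : ℝ)| ≤ 2 * L}, H x with hDdef
  have hsA : ∑' z, A z = (2 : ℝ≥0∞) ^ d * U := by
    have := Stmt9Aux.sum_cubes L hL 1 G hGm
    norm_num at this
    simpa [hAdef, hUdef] using this
  have hsB : ∑' z, B z = (8 : ℝ≥0∞) ^ d * U := by
    have := Stmt9Aux.sum_cubes L hL 4 G hGm
    norm_num at this
    simpa [hBdef, hUdef] using this
  have hsD : ∑' z, D z = (4 : ℝ≥0∞) ^ d * F := by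
    have := Stmt9Aux.sum_cubes L hL 2 H hHm
    norm_num at this
    simpa [hDdef, hFdef] using this
  set C : ℝ≥0∞ := 4 ^ d + 2 ^ d with hCdef
  have hCtop : C ≠ ⊤ := by
    rw [hCdef]
    exact ENNReal.add_ne_top.mpr ⟨ENNReal.pow_ne_top (by norm_num),
      ENNReal.pow_ne_top (by norm_num)⟩
  -- key pigeonhole claim
  have key : ∃ z : Fin d → ℤ, B z ≤ C * A z ∧ D z * U ≤ C * (A z * F) ∧ A z ≠ 0 := by
    by_contra hc
    push_neg at hc
    -- find z₀ with A z₀ ≠ 0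
    obtain ⟨z₀, hz₀⟩ : ∃ z, A z ≠ 0 := by
      by_contra hall
      push_neg at hall
      have : ∑' z, A z = 0 := ENNReal.tsum_eq_zero.mpr hall
      rw [hsA] at this
      exact (mul_ne_zero (pow_ne_zero _ (by norm_num)) hU0) this
    have strict : ∀ z, A z ≠ 0 → C * (A z * F) < B z * F + D z * U := by
      intro z hz
      by_cases h1 : B z ≤ C * A z
      · by_cases h2 : D z * U ≤ C * (A z * F)
        · exact absurd (hc z h1 h2) hz
        · push_neg at h2
          exact h2.trans_le le_add_self
      · push_neg at h1
        have : C * (A z * F) < B z * F := by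
          rw [← mul_assoc]
          exact (ENNReal.mul_lt_mul_iff_left hF0 hFtop).mpr h1
        exact this.trans_le le_self_add
    have hle : ∀ z, C * (A z * F) ≤ B z * F + D z * U := by
      intro z
      rcases eq_or_ne (A z) 0 with h | h
      · simp [h]
      · exact (strict z h).le
    have hfsum : ∑' z, C * (A z * F) = C * F * ((2 : ℝ≥0∞) ^ d * U) := by
      have : ∀ z, C * (A z * F) = C * F * A z := fun z => by ring
      simp_rw [this]
      rw [ENNReal.tsum_mul_left, hsA]
    have hgsum : ∑' z, (B z * F + D z * U)
        = (8 : ℝ≥0∞) ^ d * U * F + (4 : ℝ≥0∞) ^ d * F * U := by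
      rw [ENNReal.tsum_add, ENNReal.tsum_mul_right, ENNReal.tsum_mul_right, hsB, hsD]
    have hne : ∑' z, C * (A z * F) ≠ ⊤ := by
      rw [hfsum]
      exact ENNReal.mul_ne_top (ENNReal.mul_ne_top hCtop hFtop)
        (ENNReal.mul_ne_top (ENNReal.pow_ne_top (by norm_num)) hUtop)
    have hlt := ENNReal.tsum_lt_tsum hne hle (strict z₀ hz₀)
    rw [hfsum, hgsum] at hlt
    have heq : C * F * ((2 : ℝ≥0∞) ^ d * U)
        = (8 : ℝ≥0∞) ^ d * U * F + (4 : ℝ≥0∞) ^ d * F * U := by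
      have e8 : (8 : ℝ≥0∞) ^ d = 4 ^ d * 2 ^ d := by
        rw [← mul_pow]; norm_num
      have e4 : (4 : ℝ≥0∞) ^ d = 2 ^ d * 2 ^ d := by
        rw [← mul_pow]; norm_num
      rw [hCdef, e8, e4]; ring
    rw [heq] at hlt
    exact lt_irrefl _ hlt
  obtain ⟨z, h1, h2, h3⟩ := key
  refine ⟨z, ?_, ?_, ?_⟩
  · -- first inequality
    show eLpNorm u 2 (volume.restrict {x | ∀ i, |x i - L * (z i : ℝ)| ≤ 4 * L})
        ≤ ENNReal.ofReal (Real.sqrt (4 ^ d + 2 ^ d)) *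
          eLpNorm u 2 (volume.restrict {x | ∀ i, |x i - L * (z i : ℝ)| ≤ L})
    rw [Stmt9Aux.eLp2, Stmt9Aux.eLp2, hsqrtC d, ← ENNReal.mul_rpow_of_nonneg _ _ (by norm_num)]
    exact (ENNReal.rpow_le_rpow_iff (by norm_num)).mpr h1
  · show eLpNorm f 2 (volume.restrict {x | ∀ i, |x i - L * (z i : ℝ)| ≤ 2 * L})
        * eLpNorm u 2 volume
        ≤ ENNReal.ofReal (Real.sqrt (4 ^ d + 2 ^ d)) *
          (eLpNorm u 2 (volume.restrict {x | ∀ i, |x i - L * (z i : ℝ)| ≤ L})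
            * eLpNorm f 2 volume)
    rw [heu, hef, Stmt9Aux.eLp2, Stmt9Aux.eLp2, hsqrtC d,
      ← ENNReal.mul_rpow_of_nonneg _ _ (by norm_num : (0:ℝ) ≤ 1/2),
      ← ENNReal.mul_rpow_of_nonneg _ _ (by norm_num : (0:ℝ) ≤ 1/2),
      ← ENNReal.mul_rpow_of_nonneg _ _ (by norm_num : (0:ℝ) ≤ 1/2)]
    exact (ENNReal.rpow_le_rpow_iff (by norm_num)).mpr h2
  · show eLpNorm u 2 (volume.restrict {x | ∀ i, |x i - L * (z i : ℝ)| ≤ L}) ≠ 0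
    rw [Stmt9Aux.eLp2]
    intro h
    rcases ENNReal.rpow_eq_zero_iff.mp h with ⟨h0, _⟩ | ⟨_, hneg⟩
    · exact h3 h0
    · norm_num at hneg
end

section
/- Let A be a nonnegative self-adjoint operator on a Hilbert space H with associated quadratic form 𝔞. Suppose u ∈ Dom(𝔞) with ‖u‖_H = 1, λ ∈ R, and 0 < ε < 1 satisfy |𝔞(u, v) − λ(u, v)_H| ≤ ε √(𝔞(v, v) + ‖v‖_H²) for all v ∈ Dom(𝔞). Then dist(λ, Sp(A)) ≤ |λ + 1| ε / (1 − ε). -/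
open MeasureTheory

open scoped RealInnerProductSpace


lemma aux_cs {H : Type*} [NormedAddCommGroup H] [InnerProductSpace ℝ H]
    (Q : H →L[ℝ] H) (hsym : ∀ x y : H, ⟪Q x, y⟫ = ⟪x, Q y⟫)
    (hpos : ∀ x : H, 0 ≤ ⟪Q x, x⟫) (x : H) :
    ‖Q x‖ ^ 2 * ‖Q x‖ ^ 2 ≤ ⟪Q x, x⟫ * (‖Q‖ * ‖Q x‖ ^ 2) := by
  have hxy : ∀ x y : H, ⟪Q x, y⟫ ^ 2 ≤ ⟪Q x, x⟫ * ⟪Q y, y⟫ := by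
    intro x y
    have key : ∀ t : ℝ, 0 ≤ ⟪Q y, y⟫ * (t * t) + (2 * ⟪Q x, y⟫) * t + ⟪Q x, x⟫ := by
      intro t
      have h := hpos (x + t • y)
      have hexp : ⟪Q (x + t • y), x + t • y⟫
          = ⟪Q x, x⟫ + t * ⟪Q x, y⟫ + t * ⟪Q y, x⟫ + t ^ 2 * ⟪Q y, y⟫ := by
        rw [map_add, _root_.map_smul]
        simp [inner_add_left, inner_add_right, real_inner_smul_left, real_inner_smul_right]
        ring
      have hyx : ⟪Q y, x⟫ = ⟪Q x, y⟫ := by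
        rw [hsym y x, real_inner_comm]
      rw [hexp, hyx] at h
      nlinarith [h]
    have := discrim_le_zero key
    rw [discrim] at this
    nlinarith [this]
  have h1 := hxy x (Q x)
  have h2 : ⟪Q x, Q x⟫ = ‖Q x‖ ^ 2 := real_inner_self_eq_norm_sq (Q x)
  have h3 : ⟪Q (Q x), Q x⟫ ≤ ‖Q‖ * ‖Q x‖ ^ 2 := by
    calc ⟪Q (Q x), Q x⟫ ≤ ‖Q (Q x)‖ * ‖Q x‖ := real_inner_le_norm _ _
    _ ≤ (‖Q‖ * ‖Q x‖) * ‖Q x‖ := by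
        gcongr; exact Q.le_opNorm _
    _ = ‖Q‖ * ‖Q x‖ ^ 2 := by ring
  nlinarith [h1, hpos x, hpos (Q x), sq_nonneg (‖Q x‖)]


lemma aux_spec {H : Type*} [NormedAddCommGroup H] [InnerProductSpace ℝ H] [CompleteSpace H]
    (T : H →L[ℝ] H) (hT : IsSelfAdjoint T) (u : H) (hu : ‖u‖ = 1) :
    sInf {y : ℝ | ∃ x : H, ‖x‖ = 1 ∧ y = ⟪T x, x⟫} ∈ spectrum ℝ T := by
  set S : Set ℝ := {y : ℝ | ∃ x : H, ‖x‖ = 1 ∧ y = ⟪T x, x⟫} with hS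
  have hne : S.Nonempty := ⟨⟪T u, u⟫, u, hu, rfl⟩
  have hbdd : BddBelow S := by
    refine ⟨-‖T‖, fun y hy => ?_⟩
    obtain ⟨x, hx, rfl⟩ := hy
    have h1 : |⟪T x, x⟫| ≤ ‖T x‖ * ‖x‖ := abs_real_inner_le_norm _ _
    have h2 : ‖T x‖ ≤ ‖T‖ * ‖x‖ := T.le_opNorm x
    rw [hx] at h1 h2
    simp only [mul_one] at h1 h2
    have := abs_le.mp (h1.trans h2)
    linarith [this.1]
  set q : ℝ := sInf S with hq
  by_contra hmem
  rw [spectrum.notMem_iff] at hmem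
  set Q : H →L[ℝ] H := T - q • 1 with hQdef
  have hQu : IsUnit Q := by
    have : Q = -(algebraMap ℝ (H →L[ℝ] H) q - T) := by
      rw [Algebra.algebraMap_eq_smul_one, neg_sub, hQdef]
    rw [this]
    exact hmem.neg
  have hQsym : ∀ x y : H, ⟪Q x, y⟫ = ⟪x, Q y⟫ := by
    intro x y
    have h := hT.isSymmetric x y
    simp only [ContinuousLinearMap.coe_coe] at h
    simp only [hQdef, ContinuousLinearMap.sub_apply, ContinuousLinearMap.smul_apply,
      ContinuousLinearMap.one_apply, inner_sub_left, inner_sub_right,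
      real_inner_smul_left, real_inner_smul_right, h]
  have hQpos : ∀ x : H, 0 ≤ ⟪Q x, x⟫ := by
    intro x
    rcases eq_or_ne x 0 with rfl | hx0
    · simp
    · have hxn : ‖x‖ ≠ 0 := norm_ne_zero_iff.mpr hx0
      set c : ℝ := ‖x‖
      have hcpos : 0 < c := norm_pos_iff.mpr hx0
      have hnorm1 : ‖c⁻¹ • x‖ = 1 := by
        rw [norm_smul, Real.norm_eq_abs, abs_of_pos (inv_pos.mpr hcpos)]
        exact inv_mul_cancel₀ hxn
      have hmemS : ⟪T (c⁻¹ • x), c⁻¹ • x⟫ ∈ S := ⟨c⁻¹ • x, hnorm1, rfl⟩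
      have hle : q ≤ ⟪T (c⁻¹ • x), c⁻¹ • x⟫ := csInf_le hbdd hmemS
      have hexp : ⟪T (c⁻¹ • x), c⁻¹ • x⟫ = c⁻¹ * c⁻¹ * ⟪T x, x⟫ := by
        rw [_root_.map_smul, real_inner_smul_left, real_inner_smul_right]; ring
      rw [hexp] at hle
      have hTx : q * (c * c) ≤ ⟪T x, x⟫ := by
        have := mul_le_mul_of_nonneg_left hle (le_of_lt (mul_pos hcpos hcpos))
        calc q * (c * c) = (c * c) * q := by ring
        _ ≤ (c * c) * (c⁻¹ * c⁻¹ * ⟪T x, x⟫) := this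
        _ = ⟪T x, x⟫ := by field_simp
      have : ⟪Q x, x⟫ = ⟪T x, x⟫ - q * (c * c) := by
        simp only [hQdef, ContinuousLinearMap.sub_apply, ContinuousLinearMap.smul_apply,
          ContinuousLinearMap.one_apply, inner_sub_left, real_inner_smul_left]
        rw [real_inner_self_eq_norm_mul_norm]
      linarith [this, hTx]
  -- now derive a contradiction
  obtain ⟨W, hW⟩ := hQu
  have hWinv : ∀ x : H, ‖x‖ ≤ ‖(↑W⁻¹ : H →L[ℝ] H)‖ * ‖Q x‖ := by
    intro x
    have : (↑W⁻¹ : H →L[ℝ] H) (Q x) = x := by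
      rw [← hW]
      have : (↑W⁻¹ * ↑W : H →L[ℝ] H) x = x := by rw [W.inv_mul]; rfl
      exact this
    calc ‖x‖ = ‖(↑W⁻¹ : H →L[ℝ] H) (Q x)‖ := by rw [this]
    _ ≤ ‖(↑W⁻¹ : H →L[ℝ] H)‖ * ‖Q x‖ := ContinuousLinearMap.le_opNorm _ _
  set β : ℝ := ‖(↑W⁻¹ : H →L[ℝ] H)‖
  have hβpos : 0 < β := by
    by_contra hβ
    push_neg at hβ
    have := hWinv u
    rw [hu] at this
    nlinarith [norm_nonneg (Q u), this]
  have hQne : ‖Q‖ ≠ 0 := by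
    intro h0
    have hQ0 : Q = 0 := norm_eq_zero.mp h0
    have := hWinv u
    rw [hu, hQ0] at this
    simp only [ContinuousLinearMap.zero_apply, norm_zero, mul_zero] at this
    linarith
  have hQnorm : 0 < ‖Q‖ := lt_of_le_of_ne (norm_nonneg _) (Ne.symm hQne)
  set η : ℝ := (β ^ 2 * ‖Q‖)⁻¹
  have hηpos : 0 < η := by positivity
  have hlt : ∃ y ∈ S, y < q + η := by
    rw [← csInf_lt_iff hbdd hne]
    linarith
  obtain ⟨y, hyS, hylt⟩ := hlt
  obtain ⟨x, hx1, rfl⟩ := hyS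
  have hQxx : ⟪Q x, x⟫ < η := by
    have : ⟪Q x, x⟫ = ⟪T x, x⟫ - q := by
      simp only [hQdef, ContinuousLinearMap.sub_apply, ContinuousLinearMap.smul_apply,
        ContinuousLinearMap.one_apply, inner_sub_left, real_inner_smul_left]
      rw [real_inner_self_eq_norm_mul_norm, hx1]
      ring
    linarith
  have hcs := aux_cs Q hQsym hQpos x
  have hlow : 1 ≤ β * ‖Q x‖ := by
    have := hWinv x
    rwa [hx1] at this
  -- combine: 1 ≤ β²‖Qx‖² ≤ β²‖Q‖⟪Qx,x⟫ < β²‖Q‖η = 1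
  have h2 : ‖Q x‖ ^ 2 * ‖Q x‖ ^ 2 ≤ ⟪Q x, x⟫ * (‖Q‖ * ‖Q x‖ ^ 2) := hcs
  have hQxpos : 0 < ‖Q x‖ := by nlinarith
  have ha2 : 0 < ‖Q x‖ ^ 2 := by positivity
  have h3 : ‖Q x‖ ^ 2 ≤ ‖Q‖ * ⟪Q x, x⟫ := by nlinarith [h2, ha2]
  have h4 : 1 ≤ β ^ 2 * ‖Q x‖ ^ 2 := by nlinarith [hlow, hβpos.le, norm_nonneg (Q x)]
  have h5 : β ^ 2 * ‖Q‖ * η = 1 := mul_inv_cancel₀ (by positivity)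
  have h6 : 1 ≤ β ^ 2 * (‖Q‖ * ⟪Q x, x⟫) := by nlinarith [h3, h4, sq_nonneg β]
  have h7 : β ^ 2 * (‖Q‖ * ⟪Q x, x⟫) < β ^ 2 * (‖Q‖ * η) := by
    nlinarith [mul_lt_mul_of_pos_left hQxx (show (0:ℝ) < β ^ 2 * ‖Q‖ by positivity)]
  nlinarith [h5, h6, h7]

set_option maxHeartbeats 1000000 in
/-- quasimode-to-spectrum distance estimate for a nonnegative self-adjoint
operator with quadratic form `𝔞(u,v) = ⟪Au, v⟫`. -/
theorem stmt_11 {H : Type*} [NormedAddCommGroup H] [InnerProductSpace ℝ H] [CompleteSpace H]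
    (A : H →L[ℝ] H) (hA : IsSelfAdjoint A)
    (hA_nonneg : ∀ x : H, 0 ≤ (inner ℝ (A x) x : ℝ))
    (u : H) (hu : ‖u‖ = 1) (lam ε : ℝ) (hε0 : 0 < ε) (hε1 : ε < 1)
    (hquasi : ∀ v : H, |(inner ℝ (A u) v : ℝ) - lam * (inner ℝ u v : ℝ)| ≤
      ε * Real.sqrt ((inner ℝ (A v) v : ℝ) + ‖v‖ ^ 2)) :
    Metric.infDist lam (spectrum ℝ A) ≤ |lam + 1| * ε / (1 - ε) := by
  have hε1' : (0:ℝ) < 1 - ε := by linarith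
  have hrpos : 0 ≤ |lam + 1| * ε / (1 - ε) := by positivity
  by_cases hlam : lam ∈ spectrum ℝ A
  · refine le_trans ?_ hrpos
    simpa using Metric.infDist_le_dist_of_mem (x := lam) hlam
  rw [spectrum.notMem_iff] at hlam
  set T : H →L[ℝ] H := A - lam • 1 with hTdef
  have hTunit : IsUnit T := by
    have h : T = -(algebraMap ℝ (H →L[ℝ] H) lam - A) := by
      rw [Algebra.algebraMap_eq_smul_one, neg_sub, hTdef]
    rw [h]; exact hlam.neg
  have hTsa : IsSelfAdjoint T := by
    rw [hTdef, IsSelfAdjoint, star_sub, hA.star_eq, star_smul, star_one, star_trivial]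
  obtain ⟨W, hW⟩ := hTunit
  set v : H := (↑W⁻¹ : H →L[ℝ] H) u with hvdef
  have hTv : T v = u := by
    rw [← hW, hvdef]
    calc (↑W : H →L[ℝ] H) ((↑W⁻¹ : H →L[ℝ] H) u)
        = ((↑W * ↑W⁻¹ : H →L[ℝ] H)) u := rfl
    _ = u := by rw [W.mul_inv]; rfl
  have hune : u ≠ 0 := by
    intro h; rw [h, norm_zero] at hu; norm_num at hu
  have hv0 : v ≠ 0 := by
    intro h; rw [h, map_zero] at hTv; exact hune hTv.symm
  set t : ℝ := ‖v‖ with htdef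
  have ht : 0 < t := norm_pos_iff.mpr hv0
  have hTu_apply : T u = A u - lam • u := by
    simp [hTdef, ContinuousLinearMap.sub_apply, ContinuousLinearMap.smul_apply,
      ContinuousLinearMap.one_apply]
  have h1 : ⟪A u, v⟫ - lam * ⟪u, v⟫ = 1 := by
    have hsym := hTsa.isSymmetric u v
    simp only [ContinuousLinearMap.coe_coe] at hsym
    have hh : ⟪T u, v⟫ = ⟪A u, v⟫ - lam * ⟪u, v⟫ := by
      rw [hTu_apply, inner_sub_left, real_inner_smul_left]
    rw [← hh, hsym, hTv, real_inner_self_eq_norm_mul_norm, hu]; norm_num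
  have hq1 : 1 ≤ ε * Real.sqrt (⟪A v, v⟫ + ‖v‖ ^ 2) := by
    have h := hquasi v
    rw [h1, abs_one] at h
    exact h
  have hTvv : ⟪T v, v⟫ = ⟪A v, v⟫ - lam * (t * t) := by
    simp only [hTdef, ContinuousLinearMap.sub_apply, ContinuousLinearMap.smul_apply,
      ContinuousLinearMap.one_apply, inner_sub_left, real_inner_smul_left]
    rw [real_inner_self_eq_norm_mul_norm]
  have hAvv : ⟪A v, v⟫ = ⟪u, v⟫ + lam * (t * t) := by
    rw [hTv] at hTvv; linarith [hTvv]
  have huv1 : |⟪u, v⟫| ≤ t := by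
    have := abs_real_inner_le_norm u v
    rwa [hu, one_mul] at this
  have h2 : ⟪A v, v⟫ + ‖v‖ ^ 2 ≤ t + |lam + 1| * (t * t) := by
    have habs := abs_le.mp huv1
    have hle : lam + 1 ≤ |lam + 1| := le_abs_self _
    have hn : ‖v‖ ^ 2 = t * t := by rw [sq]
    rw [hAvv, hn]
    nlinarith [mul_le_mul_of_nonneg_right hle (mul_nonneg ht.le ht.le)]
  have h3 : 1 ≤ ε * Real.sqrt (t + |lam + 1| * (t * t)) :=
    le_trans hq1 (mul_le_mul_of_nonneg_left (Real.sqrt_le_sqrt h2) hε0.le)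
  have hs0' : 0 ≤ t + |lam + 1| * (t * t) := by positivity
  have h4 : 1 ≤ ε ^ 2 * (t + |lam + 1| * (t * t)) := by
    nlinarith [h3, Real.sq_sqrt hs0', Real.sqrt_nonneg (t + |lam + 1| * (t * t)), hε0]
  set m : ℝ := t⁻¹ with hmdef
  have hm : 0 < m := inv_pos.mpr ht
  have hmt : m * t = 1 := inv_mul_cancel₀ ht.ne'
  have h5 : m ^ 2 ≤ ε ^ 2 * (m + |lam + 1|) := by
    have h4' := mul_le_mul_of_nonneg_left h4 (sq_nonneg m)
    have key : m ^ 2 * (ε ^ 2 * (t + |lam + 1| * (t * t)))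
        = ε ^ 2 * (m * (m * t) + |lam + 1| * ((m * t) * (m * t))) := by ring
    rw [hmt] at key
    simp only [mul_one, one_mul] at key
    rw [key] at h4'
    linarith [h4']
  have hmu : 1 ≤ m + |lam + 1| := by
    by_cases hmu1 : 1 ≤ lam + 1
    · have : 1 ≤ |lam + 1| := le_trans hmu1 (le_abs_self _)
      linarith [hm.le]
    · push_neg at hmu1
      have habs := abs_le.mp huv1
      have h6 : -lam * (t * t) ≤ t := by
        nlinarith [hA_nonneg v, hAvv, habs.2]
      have h7 : -lam * t ≤ 1 := by nlinarith [h6, ht]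
      have h8 : -lam ≤ m := by nlinarith [h7, ht, hmt, hm]
      have h9 : lam + 1 ≤ |lam + 1| := le_abs_self _
      linarith
  have h9 : m ≤ ε * (m + |lam + 1|) := by
    have hS0 : (0:ℝ) ≤ m + |lam + 1| := by linarith
    have step : ε ^ 2 * (m + |lam + 1|) * 1 ≤ ε ^ 2 * (m + |lam + 1|) * (m + |lam + 1|) :=
      mul_le_mul_of_nonneg_left hmu (by positivity)
    have h5' : m ^ 2 ≤ (ε * (m + |lam + 1|)) ^ 2 := by nlinarith [h5, step]
    have hsq := Real.sqrt_le_sqrt h5'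
    rwa [Real.sqrt_sq hm.le, Real.sqrt_sq (by positivity)] at hsq
  have h10 : m ≤ |lam + 1| * ε / (1 - ε) := by
    rw [le_div_iff₀ hε1']
    nlinarith [h9]
  -- spectral part
  have hTTsa : IsSelfAdjoint (T * T) := by
    rw [IsSelfAdjoint, star_mul, hTsa.star_eq]
  have hqmem := aux_spec (T * T) hTTsa u hu
  set q : ℝ := sInf {y : ℝ | ∃ x : H, ‖x‖ = 1 ∧ y = ⟪(T * T) x, x⟫} with hqdef
  have hval : ∀ x : H, ⟪(T * T) x, x⟫ = ‖T x‖ ^ 2 := by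
    intro x
    have hsym := hTsa.isSymmetric (T x) x
    simp only [ContinuousLinearMap.coe_coe] at hsym
    rw [ContinuousLinearMap.mul_apply, hsym, real_inner_self_eq_norm_sq]
  have hbdd2 : BddBelow {y : ℝ | ∃ x : H, ‖x‖ = 1 ∧ y = ⟪(T * T) x, x⟫} := by
    refine ⟨0, fun y hy => ?_⟩
    obtain ⟨x, hx, rfl⟩ := hy
    rw [hval]; positivity
  have hq0 : 0 ≤ q := by
    refine le_csInf ⟨⟪(T * T) u, u⟫, u, hu, rfl⟩ fun y hy => ?_
    obtain ⟨x, hx, rfl⟩ := hy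
    rw [hval]; positivity
  have hqle : q ≤ m ^ 2 := by
    have hnorm1 : ‖t⁻¹ • v‖ = 1 := by
      rw [norm_smul, Real.norm_eq_abs, abs_of_pos (inv_pos.mpr ht)]
      exact inv_mul_cancel₀ ht.ne'
    have hTvhat : ‖T (t⁻¹ • v)‖ = m := by
      rw [ContinuousLinearMap.map_smul, norm_smul, hTv, hu, Real.norm_eq_abs, abs_of_pos (inv_pos.mpr ht), mul_one]
    have hmem2 : ⟪(T * T) (t⁻¹ • v), t⁻¹ • v⟫ ∈
        {y : ℝ | ∃ x : H, ‖x‖ = 1 ∧ y = ⟪(T * T) x, x⟫} := ⟨t⁻¹ • v, hnorm1, rfl⟩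
    have := csInf_le hbdd2 hmem2
    rwa [hval, hTvhat] at this
  set s : ℝ := Real.sqrt q with hsdef
  have hs0 : 0 ≤ s := Real.sqrt_nonneg _
  have hsle : s ≤ |lam + 1| * ε / (1 - ε) := by
    have h : s ≤ m := by
      have := Real.sqrt_le_sqrt hqle
      rwa [Real.sqrt_sq hm.le] at this
    linarith
  have hss : s * s = q := Real.mul_self_sqrt hq0
  have hexp : (T - s • 1) * (T + s • 1) = T * T - (s * s) • (1 : H →L[ℝ] H) := by
    ext x
    simp only [ContinuousLinearMap.mul_apply, ContinuousLinearMap.sub_apply,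
      ContinuousLinearMap.add_apply, ContinuousLinearMap.smul_apply,
      ContinuousLinearMap.one_apply, map_add, ContinuousLinearMap.map_smul, map_sub,
      smul_sub, smul_add, smul_smul]
    module
  have hfact : algebraMap ℝ (H →L[ℝ] H) q - T * T = -((T - s • 1) * (T + s • 1)) := by
    rw [hexp, hss, Algebra.algebraMap_eq_smul_one, neg_sub]
  have hnotunit : ¬ IsUnit ((T - s • 1) * (T + s • 1)) := by
    intro hun
    have h := spectrum.mem_iff.mp hqmem
    rw [hfact] at h
    exact h hun.neg
  have hspec : ∀ σ : ℝ, ¬ IsUnit (T - σ • 1) → (lam + σ) ∈ spectrum ℝ A := by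
    intro σ hσ
    rw [spectrum.mem_iff]
    intro hun
    apply hσ
    have h : T - σ • 1 = -(algebraMap ℝ (H →L[ℝ] H) (lam + σ) - A) := by
      rw [Algebra.algebraMap_eq_smul_one, hTdef, add_smul]
      abel
    rw [h]
    exact hun.neg
  have hcase : ¬ IsUnit (T - s • 1) ∨ ¬ IsUnit (T + s • 1) := by
    by_contra hc
    push_neg at hc
    exact hnotunit (hc.1.mul hc.2)
  rcases hcase with hcase | hcase
  · have ha := hspec s hcase
    have hd := Metric.infDist_le_dist_of_mem (x := lam) ha
    rw [Real.dist_eq] at hd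
    calc Metric.infDist lam (spectrum ℝ A) ≤ |lam - (lam + s)| := hd
    _ = s := by rw [show lam - (lam + s) = -s by ring, abs_neg, abs_of_nonneg hs0]
    _ ≤ |lam + 1| * ε / (1 - ε) := hsle
  · have hcase' : ¬ IsUnit (T - (-s) • 1) := by
      rwa [neg_smul, sub_neg_eq_add]
    have ha := hspec (-s) hcase'
    have hd := Metric.infDist_le_dist_of_mem (x := lam) ha
    rw [Real.dist_eq] at hd
    calc Metric.infDist lam (spectrum ℝ A) ≤ |lam - (lam + -s)| := hd
    _ = s := by rw [show lam - (lam + -s) = s by ring, abs_of_nonneg hs0]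
    _ ≤ |lam + 1| * ε / (1 - ε) := hsle
end

section
/- Let M ⊂ R^d be a nonempty open Z^d-periodic set, Y = [0,1)^d, n ∈ N, and 1 ≤ p < ∞. Then every function φ ∈ L^p(M ∩ nY) that is the restriction of a Z^d-periodic function admits a periodic extension φ̃ ∈ L^p(nY) satisfying ∫_Y |φ̃|^p dy ≤ c ∫_{M∩Y} |φ|^p dy and ∫_{(nY)²} |φ̃(x) − φ̃(y)|^p dx dy ≤ c² ∫_{(M∩nY)²} |φ(x) − φ(y)|^p dx dy, where c = 1 + |Y \ M|/|M ∩ Y|. -/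
open MeasureTheory ENNReal

lemma stmt15_Yc_meas {d : ℕ} (a b : ℝ) :
    MeasurableSet {x : Fin d → ℝ | ∀ i, x i ∈ Set.Ico a b} := by
  have : {x : Fin d → ℝ | ∀ i, x i ∈ Set.Ico a b}
      = Set.pi Set.univ (fun _ => Set.Ico a b) := by
    ext x; simp [Set.mem_univ_pi]
  rw [this]
  exact MeasurableSet.univ_pi fun i => measurableSet_Ico

lemma stmt15_tiling {d n : ℕ} (f : (Fin d → ℝ) → ℝ≥0∞)
    (hf : ∀ (x : Fin d → ℝ) (j : Fin d → ℤ), f (x + fun i => (j i : ℝ)) = f x) :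
    ∫⁻ x in {x : Fin d → ℝ | ∀ i, x i ∈ Set.Ico (0:ℝ) (n:ℝ)}, f x
      = (n : ℝ≥0∞) ^ d * ∫⁻ x in {x : Fin d → ℝ | ∀ i, x i ∈ Set.Ico (0:ℝ) 1}, f x := by
  set S : (Fin d → Fin n) → Set (Fin d → ℝ) :=
    fun v => Set.pi Set.univ fun i => Set.Ico ((v i : ℕ) : ℝ) ((v i : ℕ) + 1) with hS
  have hmeas : ∀ v, MeasurableSet (S v) := fun v =>
    MeasurableSet.univ_pi fun i => measurableSet_Ico
  have hcover : {x : Fin d → ℝ | ∀ i, x i ∈ Set.Ico (0:ℝ) (n:ℝ)} = ⋃ v, S v := by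
    ext x
    simp only [Set.mem_setOf_eq, Set.mem_iUnion, hS, Set.mem_univ_pi, Set.mem_Ico]
    constructor
    · intro h
      have hx0 : ∀ i, (0:ℤ) ≤ ⌊x i⌋ := fun i => Int.le_floor.2 (by simpa using (h i).1)
      have hxn : ∀ i, ⌊x i⌋ < (n:ℤ) := fun i => Int.floor_lt.2 (by simpa using (h i).2)
      refine ⟨fun i => ⟨⌊x i⌋.toNat, ?_⟩, fun i => ?_⟩
      · have h1 := hxn i; have h2 := hx0 i; omega
      · have hcast : ((⌊x i⌋.toNat : ℕ) : ℝ) = ((⌊x i⌋ : ℤ) : ℝ) := by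
          exact_mod_cast congrArg (Int.cast : ℤ → ℝ) (Int.toNat_of_nonneg (hx0 i))
        exact ⟨by rw [hcast]; exact Int.floor_le _, by rw [hcast]; exact Int.lt_floor_add_one _⟩
    · rintro ⟨v, hv⟩ i
      have h1 := (hv i).1
      have h2 := (hv i).2
      have hvn : ((v i : ℕ) : ℝ) + 1 ≤ (n : ℝ) := by
        have : (v i : ℕ) + 1 ≤ n := (v i).2
        exact_mod_cast this
      exact ⟨le_trans (by positivity) h1, by linarith⟩
  have hdisj : Pairwise (Function.onFun Disjoint S) := by
    intro v w hvw
    obtain ⟨i, hi⟩ := Function.ne_iff.1 hvw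
    refine Set.disjoint_left.2 fun x hx hx' => ?_
    have h1 := hx i (Set.mem_univ i)
    have h2 := hx' i (Set.mem_univ i)
    simp only [Set.mem_Ico] at h1 h2
    have : (v i : ℕ) = (w i : ℕ) := by
      have hle' : (v i : ℕ) < (w i : ℕ) + 1 := by
        exact_mod_cast lt_of_le_of_lt h1.1 h2.2
      have hge' : (w i : ℕ) < (v i : ℕ) + 1 := by
        exact_mod_cast lt_of_le_of_lt h2.1 h1.2
      omega
    exact hi (Fin.ext this)
  have htrans : ∀ v : Fin d → Fin n, ∫⁻ x in S v, f x
      = ∫⁻ x in {x : Fin d → ℝ | ∀ i, x i ∈ Set.Ico (0:ℝ) 1}, f x := by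
    intro v
    set vr : Fin d → ℝ := fun i => ((v i : ℕ) : ℝ) with hvr
    have hmp : MeasurePreserving (fun y : Fin d → ℝ => y + vr) volume volume :=
      measurePreserving_add_right volume vr
    have hemb : MeasurableEmbedding (fun y : Fin d → ℝ => y + vr) :=
      (MeasurableEquiv.addRight vr).measurableEmbedding
    have hpre : (fun y : Fin d → ℝ => y + vr) ⁻¹' (S v)
        = {x : Fin d → ℝ | ∀ i, x i ∈ Set.Ico (0:ℝ) 1} := by
      ext y
      simp only [Set.mem_preimage, hS, Set.mem_univ_pi, Pi.add_apply, Set.mem_Ico,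
        Set.mem_setOf_eq, hvr]
      constructor
      · intro h i; constructor <;> linarith [(h i).1, (h i).2]
      · intro h i; constructor <;> linarith [(h i).1, (h i).2]
    have hkey := hmp.setLIntegral_comp_preimage_emb hemb f (S v)
    rw [hpre] at hkey
    rw [← hkey]
    refine setLIntegral_congr_fun (stmt15_Yc_meas 0 1) ?_
    intro x _
    have : f (x + vr) = f x := by
      have := hf x (fun i => ((v i : ℕ) : ℤ))
      simpa [hvr] using this
    simp [this]
  rw [hcover, lintegral_iUnion hmeas hdisj, tsum_congr htrans, tsum_fintype]
  simp [Finset.card_univ, nsmul_eq_mul]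

lemma stmt15_cell_pos {d : ℕ} (M : Set (Fin d → ℝ)) (hM_open : IsOpen M) (hM_ne : M.Nonempty)
    (hM_per : ∀ (x : Fin d → ℝ) (j : Fin d → ℤ), (x + fun i => (j i : ℝ)) ∈ M ↔ x ∈ M) :
    volume (M ∩ {x : Fin d → ℝ | ∀ i, x i ∈ Set.Ico (0:ℝ) 1}) ≠ 0 := by
  obtain ⟨x, hx⟩ := hM_ne
  obtain ⟨ε, hε, hball⟩ := Metric.isOpen_iff.1 hM_open x hx
  set x₁ : Fin d → ℝ := fun i => Int.fract (x i) with hx₁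
  have hx₁M : x₁ ∈ M := by
    have : x₁ = x + fun i => ((-⌊x i⌋ : ℤ) : ℝ) := by
      funext i; simp [hx₁, Int.fract, sub_eq_add_neg]
    rw [this]
    exact (hM_per x _).2 hx
  have hball₁ : Metric.ball x₁ ε ⊆ M := by
    intro y hy
    set jr : Fin d → ℝ := fun i => ((-⌊x i⌋ : ℤ) : ℝ) with hjr
    have hyz : y = (y - jr) + fun i => ((-⌊x i⌋ : ℤ) : ℝ) := by
      funext i; simp [hjr]
    rw [hyz]
    refine (hM_per _ _).2 (hball ?_)
    have : dist (y - jr) x = dist y x₁ := by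
      have hxx : x = x₁ - jr := by
        funext i
        show x i = x₁ i - jr i
        simp only [hx₁, hjr, Int.fract, Int.cast_neg]
        ring
      rw [hxx, dist_sub_right]
    rw [Metric.mem_ball, this]
    exact hy
  set δ : Fin d → ℝ := fun i => min (ε/2) (1 - x₁ i) with hδ
  have hδpos : ∀ i, 0 < δ i := fun i =>
    lt_min (by linarith) (by have := Int.fract_lt_one (x i); simp [hδ, hx₁]; linarith)
  set B : Set (Fin d → ℝ) := Set.pi Set.univ fun i => Set.Ico (x₁ i) (x₁ i + δ i) with hB
  have hBsub : B ⊆ M ∩ {x : Fin d → ℝ | ∀ i, x i ∈ Set.Ico (0:ℝ) 1} := by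
    intro y hy
    constructor
    · refine hball₁ ?_
      rcases Nat.eq_zero_or_pos d with hd | hd
      · have : y = x₁ := by funext i; exact absurd i.2 (by omega)
        simp [this, Metric.mem_ball, hε]
      · rw [Metric.mem_ball, dist_pi_lt_iff hε]
        intro i
        have h := hy i (Set.mem_univ i)
        simp only [Set.mem_Ico] at h
        rw [Real.dist_eq, abs_lt]
        have := hδpos i
        have h2 : δ i ≤ ε/2 := min_le_left _ _
        constructor <;> [linarith; linarith]
    · intro i
      have h := hy i (Set.mem_univ i)
      simp only [Set.mem_Ico] at h
      have h1 : 0 ≤ x₁ i := Int.fract_nonneg (x i)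
      have h2 : δ i ≤ 1 - x₁ i := min_le_right _ _
      exact ⟨le_trans h1 h.1, by linarith⟩
  intro hzero
  have hBzero : volume B = 0 :=
    le_antisymm (hzero ▸ measure_mono hBsub) zero_le
  rw [hB, volume_pi_pi] at hBzero
  have : ∃ i ∈ Finset.univ, volume (Set.Ico (x₁ i) (x₁ i + δ i)) = 0 :=
    Finset.prod_eq_zero_iff.1 hBzero
  obtain ⟨i, -, hi⟩ := this
  rw [Real.volume_Ico] at hi
  have := hδpos i
  simp only [add_sub_cancel_left] at hi
  rw [ENNReal.ofReal_eq_zero] at hi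
  linarith

lemma stmt15_convexOn_abs_rpow {p : ℝ} (hp : 1 ≤ p) :
    ConvexOn ℝ Set.univ (fun t : ℝ => |t| ^ p) := by
  have himg : (fun t : ℝ => |t|) '' Set.univ = Set.Ici 0 := by
    ext y
    constructor
    · rintro ⟨x, -, rfl⟩; exact abs_nonneg x
    · intro hy; exact ⟨y, trivial, abs_of_nonneg hy⟩
  have hg : ConvexOn ℝ ((fun t : ℝ => |t|) '' Set.univ) (fun x : ℝ => x ^ p) := by
    rw [himg]; exact convexOn_rpow hp
  have hmono : MonotoneOn (fun x : ℝ => x ^ p) ((fun t : ℝ => |t|) '' Set.univ) := by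
    rw [himg]
    intro x hx y _ hxy
    exact Real.rpow_le_rpow hx hxy (by linarith)
  have habs : ConvexOn ℝ Set.univ (fun t : ℝ => |t|) := by
    exact convexOn_univ_norm (E := ℝ)
  exact hg.comp habs hmono

lemma stmt15_convexOn_shift {p c : ℝ} (hp : 1 ≤ p) :
    ConvexOn ℝ Set.univ (fun t : ℝ => |c - t| ^ p) := by
  have h := stmt15_convexOn_abs_rpow hp
  refine ⟨convex_univ, fun t _ s _ θ σ hθ hσ hθσ => ?_⟩
  have hkey : c - (θ • t + σ • s) = θ • (c - t) + σ • (c - s) := by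
    simp only [smul_eq_mul]
    linear_combination (-c) * hθσ
  calc |c - (θ • t + σ • s)| ^ p = |θ • (c - t) + σ • (c - s)| ^ p := by rw [hkey]
    _ ≤ θ • |c - t| ^ p + σ • |c - s| ^ p :=
        h.2 (Set.mem_univ (c - t)) (Set.mem_univ (c - s)) hθ hσ hθσ

lemma stmt15_continuous_abs_rpow {p : ℝ} (hp : 1 ≤ p) :
    Continuous (fun t : ℝ => |t| ^ p) := by
  have : ∀ t : ℝ, ContinuousAt (fun x : ℝ => x ^ p) |t| := fun t =>
    Real.continuousAt_rpow_const _ _ (Or.inr (by linarith))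
  exact continuous_iff_continuousAt.2 fun t =>
    ((this t).comp (continuous_abs.continuousAt))

/-- periodic extension from a periodic open set `M` with control of the
`Lᵖ` norm and of the convolution-type double-integral energy. -/
theorem stmt_15 {d : ℕ} (M : Set (Fin d → ℝ)) (hM_open : IsOpen M) (hM_ne : M.Nonempty)
    (hM_per : ∀ (x : Fin d → ℝ) (j : Fin d → ℤ), (x + fun i => (j i : ℝ)) ∈ M ↔ x ∈ M)
    (n : ℕ) (hn : 0 < n) (p : ℝ) (hp : 1 ≤ p)
    (φ : (Fin d → ℝ) → ℝ)
    (hφ_per : ∀ (x : Fin d → ℝ) (j : Fin d → ℤ), φ (x + fun i => (j i : ℝ)) = φ x)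
    (hφ_mem : MemLp φ (ENNReal.ofReal p)
      (volume.restrict (M ∩ {x : Fin d → ℝ | ∀ i, x i ∈ Set.Ico (0:ℝ) (n:ℝ)}))) :
    let Yc : Set (Fin d → ℝ) := {x | ∀ i, x i ∈ Set.Ico (0:ℝ) 1}
    let nY : Set (Fin d → ℝ) := {x | ∀ i, x i ∈ Set.Ico (0:ℝ) (n:ℝ)}
    let c : ℝ := 1 + (volume (Yc \ M)).toReal / (volume (M ∩ Yc)).toReal
    ∃ φt : (Fin d → ℝ) → ℝ,
      (∀ (x : Fin d → ℝ) (j : Fin d → ℤ), φt (x + fun i => (j i : ℝ)) = φt x) ∧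
      (∀ x ∈ M, φt x = φ x) ∧
      (∫⁻ y in Yc, ENNReal.ofReal (|φt y| ^ p)
        ≤ ENNReal.ofReal c * ∫⁻ y in M ∩ Yc, ENNReal.ofReal (|φ y| ^ p)) ∧
      (∫⁻ x in nY, ∫⁻ y in nY, ENNReal.ofReal (|φt x - φt y| ^ p)
        ≤ ENNReal.ofReal (c ^ 2) *
          ∫⁻ x in M ∩ nY, ∫⁻ y in M ∩ nY, ENNReal.ofReal (|φ x - φ y| ^ p)) := by
  intro Yc nY c
  classical
  have hMmeas : MeasurableSet M := hM_open.measurableSet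
  have hYcMeas : MeasurableSet Yc := stmt15_Yc_meas 0 1
  have hnYMeas : MeasurableSet nY := stmt15_Yc_meas 0 n
  have hYc_sub : Yc ⊆ nY := by
    intro x hx i
    obtain ⟨h1, h2⟩ := hx i
    exact ⟨h1, lt_of_lt_of_le h2 (by exact_mod_cast hn)⟩
  set VY := volume (M ∩ Yc) with hVY
  set Vn := volume (M ∩ nY) with hVn
  set WY := volume (Yc \ M) with hWY
  set Wn := volume (nY \ M) with hWn
  have hcval : c = 1 + WY.toReal / VY.toReal := rfl
  have hYcpi : Yc = Set.pi Set.univ (fun _ : Fin d => Set.Ico (0:ℝ) 1) := by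
    ext x; simp [Yc, Set.mem_univ_pi]
  have hnYpi : nY = Set.pi Set.univ (fun _ : Fin d => Set.Ico (0:ℝ) (n:ℝ)) := by
    ext x; simp [nY, Set.mem_univ_pi]
  have hvolYc : volume Yc ≠ ⊤ := by
    rw [hYcpi, volume_pi_pi]
    exact (ENNReal.prod_lt_top (fun i _ => by simp [Real.volume_Ico])).ne
  have hvolnY : volume nY ≠ ⊤ := by
    rw [hnYpi, volume_pi_pi]
    exact (ENNReal.prod_lt_top (fun i _ => by simp [Real.volume_Ico])).ne
  have hVYtop : VY ≠ ⊤ := fun h =>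
    hvolYc (eq_top_iff.2 (h ▸ measure_mono Set.inter_subset_right))
  have hWYtop : WY ≠ ⊤ := fun h =>
    hvolYc (eq_top_iff.2 (h ▸ measure_mono Set.diff_subset))
  have hVntop : Vn ≠ ⊤ := fun h =>
    hvolnY (eq_top_iff.2 (h ▸ measure_mono Set.inter_subset_right))
  have hWntop : Wn ≠ ⊤ := fun h =>
    hvolnY (eq_top_iff.2 (h ▸ measure_mono Set.diff_subset))
  have hVY0 : VY ≠ 0 := stmt15_cell_pos M hM_open hM_ne hM_per
  have hVn0 : Vn ≠ 0 := fun h =>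
    hVY0 (le_antisymm
      (h ▸ measure_mono (Set.inter_subset_inter_right _ hYc_sub)) zero_le)
  have npow0 : ((n : ℝ≥0∞)) ^ d ≠ 0 := by
    exact pow_ne_zero d (by exact_mod_cast hn.ne')
  have npowtop : ((n : ℝ≥0∞)) ^ d ≠ ⊤ := by
    simp [ENNReal.pow_ne_top, ENNReal.natCast_ne_top]
  -- tiling facts
  have hVnVY : Vn = (n : ℝ≥0∞) ^ d * VY := by
    have hper : ∀ (x : Fin d → ℝ) (j : Fin d → ℤ),
        (M.indicator fun _ => (1:ℝ≥0∞)) (x + fun i => (j i : ℝ))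
          = (M.indicator fun _ => (1:ℝ≥0∞)) x := by
      intro x j
      by_cases hx : x ∈ M
      · simp [Set.indicator_of_mem, hx, (hM_per x j).2 hx]
      · have : (x + fun i => ((j i : ℤ) : ℝ)) ∉ M := fun h => hx ((hM_per x j).1 h)
        simp [Set.indicator_of_notMem, hx, this]
    have := stmt15_tiling (n := n) (M.indicator fun _ => (1:ℝ≥0∞)) hper
    rw [setLIntegral_indicator hMmeas, setLIntegral_indicator hMmeas,
      setLIntegral_one, setLIntegral_one] at this
    exact this
  have hWnWY : Wn = (n : ℝ≥0∞) ^ d * WY := by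
    have hper : ∀ (x : Fin d → ℝ) (j : Fin d → ℤ),
        (Mᶜ.indicator fun _ => (1:ℝ≥0∞)) (x + fun i => (j i : ℝ))
          = (Mᶜ.indicator fun _ => (1:ℝ≥0∞)) x := by
      intro x j
      by_cases hx : x ∈ M
      · simp [Set.indicator_of_notMem, hx, (hM_per x j).2 hx]
      · have : (x + fun i => ((j i : ℤ) : ℝ)) ∉ M := fun h => hx ((hM_per x j).1 h)
        simp [Set.indicator_of_mem, hx, this]
    have := stmt15_tiling (n := n) (Mᶜ.indicator fun _ => (1:ℝ≥0∞)) hper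
    rw [setLIntegral_indicator hMmeas.compl, setLIntegral_indicator hMmeas.compl,
      setLIntegral_one, setLIntegral_one] at this
    have e1 : Mᶜ ∩ nY = nY \ M := by rw [Set.diff_eq, Set.inter_comm]
    have e2 : Mᶜ ∩ Yc = Yc \ M := by rw [Set.diff_eq, Set.inter_comm]
    rw [e1, e2] at this
    exact this
  have hratio : ENNReal.ofReal (WY.toReal / VY.toReal) = WY / VY := by
    rw [ENNReal.ofReal_div_of_pos (ENNReal.toReal_pos hVY0 hVYtop),
      ENNReal.ofReal_toReal hWYtop, ENNReal.ofReal_toReal hVYtop]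
  have hratioN : Wn / Vn = WY / VY := by
    rw [hWnWY, hVnVY, ENNReal.mul_div_mul_left _ _ npow0 npowtop]
  -- the measure and φ facts
  set μn := volume.restrict (M ∩ nY) with hμn
  haveI : IsFiniteMeasure μn := ⟨by
    rw [hμn, Measure.restrict_apply_univ]; exact hVntop.lt_top⟩
  haveI : NeZero μn := ⟨by
    rw [hμn]
    intro h
    exact hVn0 (Measure.restrict_eq_zero.1 h)⟩
  have hφmem : MemLp φ (ENNReal.ofReal p) μn := hφ_mem
  have hp0 : (0:ℝ) < p := lt_of_lt_of_le one_pos hp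
  have hpne : ENNReal.ofReal p ≠ 0 := by
    simp only [ne_eq, ENNReal.ofReal_eq_zero, not_le]; linarith
  have hφint : Integrable φ μn := hφmem.integrable (by rwa [ENNReal.one_le_ofReal])
  have hφpint : Integrable (fun x => |φ x| ^ p) μn := by
    have := hφmem.integrable_norm_rpow hpne ENNReal.ofReal_ne_top
    simpa [ENNReal.toReal_ofReal hp0.le, Real.norm_eq_abs] using this
  set A : ℝ := ⨍ x, φ x ∂μn with hA
  set φt : (Fin d → ℝ) → ℝ := fun x => if x ∈ M then φ x else A with hφt
  have hμn_univ : μn Set.univ = Vn := by rw [hμn, Measure.restrict_apply_univ]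
  -- Jensen 1
  have hA1 : ENNReal.ofReal (|A| ^ p)
      ≤ (∫⁻ x in M ∩ Yc, ENNReal.ofReal (|φ x| ^ p)) / VY := by
    have hjen : |A| ^ p ≤ ⨍ x, |φ x| ^ p ∂μn :=
      (stmt15_convexOn_abs_rpow hp).map_average_le
        (stmt15_continuous_abs_rpow hp).continuousOn isClosed_univ
        (Filter.Eventually.of_forall fun _ => Set.mem_univ _) hφint hφpint
    have havg : ⨍ x, |φ x| ^ p ∂μn = (∫ x, |φ x| ^ p ∂μn) / Vn.toReal := by
      rw [average_eq, smul_eq_mul, measureReal_def, hμn_univ]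
      ring
    have hlint : ENNReal.ofReal (∫ x, |φ x| ^ p ∂μn)
        = ∫⁻ x, ENNReal.ofReal (|φ x| ^ p) ∂μn :=
      ofReal_integral_eq_lintegral_ofReal hφpint
        (Filter.Eventually.of_forall fun x => by positivity)
    have hMnYtoYc : ∫⁻ x in M ∩ nY, ENNReal.ofReal (|φ x| ^ p)
        = (n : ℝ≥0∞) ^ d * ∫⁻ x in M ∩ Yc, ENNReal.ofReal (|φ x| ^ p) := by
      have hper : ∀ (x : Fin d → ℝ) (j : Fin d → ℤ),
          (M.indicator fun x => ENNReal.ofReal (|φ x| ^ p)) (x + fun i => (j i : ℝ))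
            = (M.indicator fun x => ENNReal.ofReal (|φ x| ^ p)) x := by
        intro x j
        by_cases hx : x ∈ M
        · simp [Set.indicator_of_mem, hx, (hM_per x j).2 hx, hφ_per x j]
        · have : (x + fun i => ((j i : ℤ) : ℝ)) ∉ M := fun h => hx ((hM_per x j).1 h)
          simp [Set.indicator_of_notMem, hx, this]
      have := stmt15_tiling (n := n) (M.indicator fun x => ENNReal.ofReal (|φ x| ^ p)) hper
      rw [setLIntegral_indicator hMmeas, setLIntegral_indicator hMmeas] at this
      exact this
    calc ENNReal.ofReal (|A| ^ p)
        ≤ ENNReal.ofReal ((∫ x, |φ x| ^ p ∂μn) / Vn.toReal) :=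
          ENNReal.ofReal_le_ofReal (by rw [← havg]; exact hjen)
      _ = ENNReal.ofReal (∫ x, |φ x| ^ p ∂μn) / ENNReal.ofReal Vn.toReal :=
          ENNReal.ofReal_div_of_pos (ENNReal.toReal_pos hVn0 hVntop)
      _ = (∫⁻ x in M ∩ nY, ENNReal.ofReal (|φ x| ^ p)) / Vn := by
          rw [hlint, ENNReal.ofReal_toReal hVntop, hμn]
      _ = ((n : ℝ≥0∞) ^ d * ∫⁻ x in M ∩ Yc, ENNReal.ofReal (|φ x| ^ p))
            / ((n : ℝ≥0∞) ^ d * VY) := by rw [hMnYtoYc, hVnVY]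
      _ = (∫⁻ x in M ∩ Yc, ENNReal.ofReal (|φ x| ^ p)) / VY :=
          ENNReal.mul_div_mul_left _ _ npow0 npowtop
  refine ⟨φt, ?_, ?_, ?_, ?_⟩
  · intro x j
    by_cases hx : x ∈ M
    · simp only [hφt, if_pos hx, if_pos ((hM_per x j).2 hx), hφ_per x j]
    · have hx' : (x + fun i => ((j i : ℤ) : ℝ)) ∉ M := fun h => hx ((hM_per x j).1 h)
      simp only [hφt, if_neg hx, if_neg hx']
  · intro x hx
    simp only [hφt, if_pos hx]
  · -- first integral inequality
    have hdisj1 : Disjoint (M ∩ Yc) (Yc \ M) :=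
      Set.disjoint_left.2 fun x hx hx' => hx'.2 hx.1
    have hsplit1 : Yc = (M ∩ Yc) ∪ (Yc \ M) := by
      rw [Set.inter_comm M Yc]
      exact (Set.inter_union_diff Yc M).symm
    calc ∫⁻ y in Yc, ENNReal.ofReal (|φt y| ^ p)
        = ∫⁻ y in (M ∩ Yc) ∪ (Yc \ M), ENNReal.ofReal (|φt y| ^ p) := by rw [← hsplit1]
      _ = (∫⁻ y in M ∩ Yc, ENNReal.ofReal (|φt y| ^ p))
            + ∫⁻ y in Yc \ M, ENNReal.ofReal (|φt y| ^ p) :=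
          lintegral_union (hYcMeas.diff hMmeas) hdisj1
      _ = (∫⁻ y in M ∩ Yc, ENNReal.ofReal (|φ y| ^ p)) + ENNReal.ofReal (|A| ^ p) * WY := by
          congr 1
          · exact setLIntegral_congr_fun (hMmeas.inter hYcMeas)
              (fun y hy => by
                simp only [hφt, if_pos hy.1])
          · have : ∫⁻ y in Yc \ M, ENNReal.ofReal (|φt y| ^ p)
                = ∫⁻ _ in Yc \ M, ENNReal.ofReal (|A| ^ p) :=
              setLIntegral_congr_fun (hYcMeas.diff hMmeas)
                (fun y hy => by
                  simp only [hφt, if_neg hy.2])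
            rw [this, setLIntegral_const]
      _ ≤ (∫⁻ y in M ∩ Yc, ENNReal.ofReal (|φ y| ^ p))
            + (WY / VY) * ∫⁻ y in M ∩ Yc, ENNReal.ofReal (|φ y| ^ p) := by
          refine add_le_add_right ?_ _
          calc ENNReal.ofReal (|A| ^ p) * WY
              ≤ ((∫⁻ y in M ∩ Yc, ENNReal.ofReal (|φ y| ^ p)) / VY) * WY :=
                mul_le_mul_left hA1 _
            _ = (WY / VY) * ∫⁻ y in M ∩ Yc, ENNReal.ofReal (|φ y| ^ p) := by
                rw [ENNReal.div_eq_inv_mul, ENNReal.div_eq_inv_mul]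
                ring
      _ = (1 + WY / VY) * ∫⁻ y in M ∩ Yc, ENNReal.ofReal (|φ y| ^ p) := by
          rw [add_mul, one_mul]
      _ = ENNReal.ofReal c * ∫⁻ y in M ∩ Yc, ENNReal.ofReal (|φ y| ^ p) := by
          rw [hcval, ENNReal.ofReal_add zero_le_one
            (div_nonneg ENNReal.toReal_nonneg ENNReal.toReal_nonneg),
            ENNReal.ofReal_one, hratio]
  · -- second integral inequality
    set I₂ := ∫⁻ x in M ∩ nY, ∫⁻ y in M ∩ nY, ENNReal.ofReal (|φ x - φ y| ^ p) with hI₂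
    set J := ∫⁻ x in M ∩ nY, ENNReal.ofReal (|φ x - A| ^ p) with hJ
    have hdisj2 : Disjoint (M ∩ nY) (nY \ M) :=
      Set.disjoint_left.2 fun x hx hx' => hx'.2 hx.1
    have hsplit2 : nY = (M ∩ nY) ∪ (nY \ M) := by
      rw [Set.inter_comm M nY]; exact (Set.inter_union_diff nY M).symm
    have hInner : ∀ b : ℝ, ∫⁻ y in nY, ENNReal.ofReal (|b - φt y| ^ p)
        = (∫⁻ y in M ∩ nY, ENNReal.ofReal (|b - φ y| ^ p))
          + ENNReal.ofReal (|b - A| ^ p) * Wn := by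
      intro b
      calc ∫⁻ y in nY, ENNReal.ofReal (|b - φt y| ^ p)
          = ∫⁻ y in (M ∩ nY) ∪ (nY \ M), ENNReal.ofReal (|b - φt y| ^ p) := by
            rw [← hsplit2]
        _ = (∫⁻ y in M ∩ nY, ENNReal.ofReal (|b - φt y| ^ p))
              + ∫⁻ y in nY \ M, ENNReal.ofReal (|b - φt y| ^ p) :=
            lintegral_union (hnYMeas.diff hMmeas) hdisj2
        _ = _ := by
            congr 1
            · exact setLIntegral_congr_fun (hMmeas.inter hnYMeas)
                (fun y hy => by simp only [hφt, if_pos hy.1])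
            · have : ∫⁻ y in nY \ M, ENNReal.ofReal (|b - φt y| ^ p)
                  = ∫⁻ _ in nY \ M, ENNReal.ofReal (|b - A| ^ p) :=
                setLIntegral_congr_fun (hnYMeas.diff hMmeas)
                  (fun y hy => by simp only [hφt, if_neg hy.2])
              rw [this, setLIntegral_const]
    have hA2 : ∀ x : Fin d → ℝ, ENNReal.ofReal (|φ x - A| ^ p)
        ≤ (∫⁻ y in M ∩ nY, ENNReal.ofReal (|φ x - φ y| ^ p)) / Vn := by
      intro x
      have hsubmem : MemLp (fun y => φ x - φ y) (ENNReal.ofReal p) μn :=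
        (memLp_const (φ x)).sub hφmem
      have hint2 : Integrable (fun y => |φ x - φ y| ^ p) μn := by
        have := hsubmem.integrable_norm_rpow hpne ENNReal.ofReal_ne_top
        simpa [ENNReal.toReal_ofReal hp0.le, Real.norm_eq_abs] using this
      have hjen : |φ x - A| ^ p ≤ ⨍ y, |φ x - φ y| ^ p ∂μn :=
        (stmt15_convexOn_shift (c := φ x) hp).map_average_le
          ((stmt15_continuous_abs_rpow hp).comp
            (continuous_const.sub continuous_id)).continuousOn isClosed_univ
          (Filter.Eventually.of_forall fun _ => Set.mem_univ _) hφint hint2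
      have havg : ⨍ y, |φ x - φ y| ^ p ∂μn = (∫ y, |φ x - φ y| ^ p ∂μn) / Vn.toReal := by
        rw [average_eq, smul_eq_mul, measureReal_def, hμn_univ]; ring
      have hlint : ENNReal.ofReal (∫ y, |φ x - φ y| ^ p ∂μn)
          = ∫⁻ y, ENNReal.ofReal (|φ x - φ y| ^ p) ∂μn :=
        ofReal_integral_eq_lintegral_ofReal hint2
          (Filter.Eventually.of_forall fun y => by positivity)
      calc ENNReal.ofReal (|φ x - A| ^ p)
          ≤ ENNReal.ofReal ((∫ y, |φ x - φ y| ^ p ∂μn) / Vn.toReal) :=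
            ENNReal.ofReal_le_ofReal (by rw [← havg]; exact hjen)
        _ = ENNReal.ofReal (∫ y, |φ x - φ y| ^ p ∂μn) / ENNReal.ofReal Vn.toReal :=
            ENNReal.ofReal_div_of_pos (ENNReal.toReal_pos hVn0 hVntop)
        _ = (∫⁻ y in M ∩ nY, ENNReal.ofReal (|φ x - φ y| ^ p)) / Vn := by
            rw [hlint, ENNReal.ofReal_toReal hVntop, hμn]
    have hJle : J * Wn ≤ (Wn / Vn) * I₂ := by
      have h1 : J ≤ I₂ * Vn⁻¹ := by
        rw [hJ, hI₂]
        calc ∫⁻ x in M ∩ nY, ENNReal.ofReal (|φ x - A| ^ p)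
            ≤ ∫⁻ x in M ∩ nY,
                (∫⁻ y in M ∩ nY, ENNReal.ofReal (|φ x - φ y| ^ p)) * Vn⁻¹ :=
              lintegral_mono fun x => by
                have := hA2 x
                rwa [div_eq_mul_inv] at this
          _ = (∫⁻ x in M ∩ nY, ∫⁻ y in M ∩ nY, ENNReal.ofReal (|φ x - φ y| ^ p)) * Vn⁻¹ :=
              lintegral_mul_const' _ _ (by simp [hVn0])
      calc J * Wn ≤ (I₂ * Vn⁻¹) * Wn := mul_le_mul_left h1 _
        _ = (Wn / Vn) * I₂ := by rw [ENNReal.div_eq_inv_mul]; ring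
    have hGmeas : Measurable (fun t : ℝ => ENNReal.ofReal (|t - A| ^ p)) :=
      ENNReal.measurable_ofReal.comp
        (((stmt15_continuous_abs_rpow hp).measurable).comp
          (measurable_id.sub measurable_const))
    have hφae : AEMeasurable φ μn := hφmem.1.aemeasurable
    have hsum : ∫⁻ x in M ∩ nY,
        ((∫⁻ y in M ∩ nY, ENNReal.ofReal (|φ x - φ y| ^ p))
          + ENNReal.ofReal (|φ x - A| ^ p) * Wn)
        = I₂ + J * Wn := by
      rw [lintegral_add_right' _
          (by exact (hGmeas.comp_aemeasurable hφae).mul_const Wn),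
        lintegral_mul_const' Wn _ hWntop]
    have hr0 : 0 ≤ WY.toReal / VY.toReal :=
      div_nonneg ENNReal.toReal_nonneg ENNReal.toReal_nonneg
    have hfinal : 1 + 2 * (WY / VY) ≤ ENNReal.ofReal (c ^ 2) := by
      have h1 : ENNReal.ofReal (1 + 2 * (WY.toReal / VY.toReal)) = 1 + 2 * (WY / VY) := by
        rw [ENNReal.ofReal_add zero_le_one (by positivity), ENNReal.ofReal_one,
          ENNReal.ofReal_mul (by norm_num : (0:ℝ) ≤ 2), hratio]
        norm_num
      rw [← h1]
      apply ENNReal.ofReal_le_ofReal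
      rw [hcval]
      nlinarith [hr0]
    calc ∫⁻ x in nY, ∫⁻ y in nY, ENNReal.ofReal (|φt x - φt y| ^ p)
        = ∫⁻ x in (M ∩ nY) ∪ (nY \ M),
            ∫⁻ y in nY, ENNReal.ofReal (|φt x - φt y| ^ p) := by
          rw [← hsplit2]
      _ = (∫⁻ x in M ∩ nY, ∫⁻ y in nY, ENNReal.ofReal (|φt x - φt y| ^ p))
            + ∫⁻ x in nY \ M, ∫⁻ y in nY, ENNReal.ofReal (|φt x - φt y| ^ p) :=
          lintegral_union (hnYMeas.diff hMmeas) hdisj2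
      _ = (I₂ + J * Wn) + J * Wn := by
          congr 1
          · have hcong : ∫⁻ x in M ∩ nY, ∫⁻ y in nY, ENNReal.ofReal (|φt x - φt y| ^ p)
                = ∫⁻ x in M ∩ nY, ((∫⁻ y in M ∩ nY, ENNReal.ofReal (|φ x - φ y| ^ p))
                    + ENNReal.ofReal (|φ x - A| ^ p) * Wn) :=
              setLIntegral_congr_fun (hMmeas.inter hnYMeas)
                (fun x hx => by
                  rw [show φt x = φ x from by simp only [hφt, if_pos hx.1]]
                  exact hInner (φ x))
            rw [hcong, hsum]
          · have hAA : ENNReal.ofReal (|A - A| ^ p) = 0 := by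
              simp [Real.zero_rpow (ne_of_gt hp0)]
            have hcong : ∫⁻ x in nY \ M, ∫⁻ y in nY, ENNReal.ofReal (|φt x - φt y| ^ p)
                = ∫⁻ _ in nY \ M,
                    (∫⁻ y in M ∩ nY, ENNReal.ofReal (|A - φ y| ^ p)) :=
              setLIntegral_congr_fun (hnYMeas.diff hMmeas)
                (fun x hx => by
                  rw [show φt x = A from by simp only [hφt, if_neg hx.2]]
                  rw [hInner A, hAA, zero_mul, add_zero])
            rw [hcong, setLIntegral_const]
            congr 1
            rw [hJ]
            simp_rw [abs_sub_comm A]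
      _ = I₂ + 2 * (J * Wn) := by ring
      _ ≤ I₂ + 2 * ((Wn / Vn) * I₂) := by gcongr
      _ = (1 + 2 * (WY / VY)) * I₂ := by rw [hratioN]; ring
      _ ≤ ENNReal.ofReal (c ^ 2) * I₂ := mul_le_mul_left hfinal _
end

section
/- Let A_ε and A be self-adjoint operators (on possibly varying Hilbert spaces linked by two-scale convergence) such that A_ε converges to A in the strong two-scale resolvent sense: whenever f_ε two-scale converges strongly to f in the range space, (A_ε + I)^{-1} f_ε two-scale converges strongly to (A + I)^{-1} f. Then every λ ∈ Sp(A) is a limit of points λ_ε ∈ Sp(A_ε), i.e. Sp(A) ⊂ lim_{ε→0} Sp(A_ε). -/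
open Filter ContinuousLinearMap Pointwise

local notation "⟪" x ", " y "⟫" => inner (𝕜 := ℝ) x y

/-- The inverse of a self-adjoint unit is self-adjoint. -/
lemma unit_inv_sa {A : Type*} [Ring A] [StarRing A] {w : Aˣ}
    (h : IsSelfAdjoint (w : A)) : IsSelfAdjoint ((w⁻¹ : Aˣ) : A) := by
  have h1 : star ((w⁻¹ : Aˣ) : A) * (w : A) = 1 := by
    calc star ((w⁻¹ : Aˣ) : A) * (w : A) = star ((w⁻¹ : Aˣ) : A) * star (w : A) := by rw [h]
    _ = star ((w : A) * ((w⁻¹ : Aˣ) : A)) := (star_mul _ _).symm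
    _ = 1 := by rw [w.mul_inv, star_one]
  calc star ((w⁻¹ : Aˣ) : A) = star ((w⁻¹ : Aˣ) : A) * ((w : A) * ((w⁻¹ : Aˣ) : A)) := by
        rw [w.mul_inv, mul_one]
  _ = (star ((w⁻¹ : Aˣ) : A) * (w : A)) * ((w⁻¹ : Aˣ) : A) := by rw [mul_assoc]
  _ = ((w⁻¹ : Aˣ) : A) := by rw [h1, one_mul]

lemma sa_one (E : Type*) [NormedAddCommGroup E] [InnerProductSpace ℝ E] [CompleteSpace E] :
    IsSelfAdjoint (1 : E →L[ℝ] E) := by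
  rw [IsSelfAdjoint, star_one]

/-- A self-adjoint operator that is bounded below is invertible. -/
lemma sa_isUnit {E : Type*} [NormedAddCommGroup E] [InnerProductSpace ℝ E] [CompleteSpace E]
    {T : E →L[ℝ] E} (hT : IsSelfAdjoint T) {c : ℝ} (hc : 0 < c)
    (hbd : ∀ x, c * ‖x‖ ≤ ‖T x‖) : IsUnit T := by
  have hinj : LinearMap.ker (T : E →ₗ[ℝ] E) = ⊥ := by
    rw [LinearMap.ker_eq_bot']
    intro x hx
    have h := hbd x
    rw [show T x = 0 from hx, norm_zero] at h
    have hx0 : ‖x‖ ≤ 0 := by nlinarith [norm_nonneg x]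
    simpa [norm_eq_zero] using le_antisymm hx0 (norm_nonneg x)
  have hanti : AntilipschitzWith (⟨c, hc.le⟩ : NNReal)⁻¹ T := by
    refine ContinuousLinearMap.antilipschitz_of_bound T fun x => ?_
    show ‖x‖ ≤ c⁻¹ * ‖T x‖
    rw [inv_mul_eq_div, le_div_iff₀ hc, mul_comm]
    exact hbd x
  have hclosed : IsClosed (LinearMap.range (T : E →ₗ[ℝ] E) : Set E) := by
    rw [LinearMap.coe_range]
    exact hanti.isClosed_range T.uniformContinuous
  have hcs : CompleteSpace (LinearMap.range (T : E →ₗ[ℝ] E)) := hclosed.completeSpace_coe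
  have horth : (LinearMap.range (T : E →ₗ[ℝ] E))ᗮ = ⊥ := by
    rw [Submodule.eq_bot_iff]
    intro y hy
    have h2 := (Submodule.mem_orthogonal _ y).mp hy (T (T y)) (LinearMap.mem_range_self _ (T y))
    have h1 : ⟪T y, T y⟫ = 0 := (hT.isSymmetric (T y) y).symm.trans h2
    have hTy : T y = 0 := inner_self_eq_zero.mp h1
    have h := hbd y
    rw [hTy, norm_zero] at h
    have hy0 : ‖y‖ ≤ 0 := by nlinarith [norm_nonneg y]
    simpa [norm_eq_zero] using le_antisymm hy0 (norm_nonneg y)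
  have hsurj : LinearMap.range (T : E →ₗ[ℝ] E) = ⊤ := Submodule.orthogonal_eq_bot_iff.mp horth
  exact ⟨(ContinuousLinearEquiv.ofBijective T hinj hsurj).toUnit, by ext x; rfl⟩

set_option maxHeartbeats 800000 in
/-- Every spectral point of a self-adjoint operator admits approximate eigenvectors. -/
lemma sa_approx {E : Type*} [NormedAddCommGroup E] [InnerProductSpace ℝ E] [CompleteSpace E]
    {T : E →L[ℝ] E} (hT : IsSelfAdjoint T) {μ : ℝ} (hμ : μ ∈ spectrum ℝ T)
    {δ : ℝ} (hδ : 0 < δ) : ∃ u : E, ‖u‖ = 1 ∧ ‖T u - μ • u‖ < δ := by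
  by_contra hcon
  push_neg at hcon
  set T' : E →L[ℝ] E := T - μ • 1 with hT'def
  have hT'app : ∀ x, T' x = T x - μ • x := by
    intro x; simp [hT'def]
  have hT'sa : IsSelfAdjoint T' :=
    hT.sub (by rw [IsSelfAdjoint, star_smul, star_trivial, star_one])
  have hbd : ∀ x, δ * ‖x‖ ≤ ‖T' x‖ := by
    intro x
    rcases eq_or_ne x 0 with rfl | hx
    · simp
    · have hnx : (0:ℝ) < ‖x‖ := norm_pos_iff.mpr hx
      have hu : ‖(‖x‖⁻¹ • x)‖ = 1 := by
        rw [norm_smul, norm_inv, norm_norm, inv_mul_cancel₀ hnx.ne']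
      have h := hcon _ hu
      have heq : T (‖x‖⁻¹ • x) - μ • (‖x‖⁻¹ • x) = ‖x‖⁻¹ • (T x - μ • x) := by
        rw [map_smul, smul_sub, smul_comm]
      rw [heq, norm_smul, norm_inv, norm_norm] at h
      rw [hT'app]
      calc δ * ‖x‖ ≤ (‖x‖⁻¹ * ‖T x - μ • x‖) * ‖x‖ := by nlinarith
      _ = ‖T x - μ • x‖ := by field_simp
  have hunit : IsUnit T' := sa_isUnit hT'sa hδ hbd
  have : IsUnit (algebraMap ℝ (E →L[ℝ] E) μ - T) := by
    have heq : algebraMap ℝ (E →L[ℝ] E) μ - T = -T' := by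
      rw [hT'def, neg_sub, Algebra.algebraMap_eq_smul_one]
    rw [heq]
    exact hunit.neg
  exact (spectrum.mem_iff.mp hμ) this

set_option maxHeartbeats 1000000 in
/-- For a self-adjoint operator on a nontrivial real Hilbert space, `‖S‖` or `-‖S‖`
belongs to the (real) spectrum. -/
lemma sa_norm_mem {E : Type*} [NormedAddCommGroup E] [InnerProductSpace ℝ E] [CompleteSpace E]
    [Nontrivial E] {S : E →L[ℝ] E} (hS : IsSelfAdjoint S) :
    ‖S‖ ∈ spectrum ℝ S ∨ -‖S‖ ∈ spectrum ℝ S := by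
  set t : ℝ := ‖S‖ with ht
  have hker : ∀ δ > (0:ℝ), ∃ u : E, ‖u‖ = 1 ∧ ‖S (S u) - (t*t) • u‖ < δ := by
    intro δ hδ
    rcases eq_or_lt_of_le (norm_nonneg S) with h0 | hpos
    · obtain ⟨x, hx⟩ := exists_ne (0 : E)
      refine ⟨‖x‖⁻¹ • x, ?_, ?_⟩
      · rw [norm_smul, norm_inv, norm_norm, inv_mul_cancel₀ (norm_pos_iff.mpr hx).ne']
      · have hn : ‖S‖ = 0 := by rw [← ht]; exact h0.symm
        have hS0 : S = 0 := norm_eq_zero.mp hn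
        have ht0 : t = 0 := ht.trans hn
        rw [hS0, ht0]
        simpa using hδ
    · set ε₁ : ℝ := min (t/2) (δ^2/(4*t^3)) with hε₁def
      have htpos : 0 < t := hpos
      have hε₁pos : 0 < ε₁ := lt_min (by positivity) (by positivity)
      have hε₁t : ε₁ < t := (min_le_left _ _).trans_lt (by linarith)
      obtain ⟨x, hx1, hx2⟩ := S.exists_lt_apply_of_lt_opNorm
        (show t - ε₁ < ‖S‖ by rw [← ht]; linarith)
      have hSx : 0 < ‖S x‖ := lt_of_le_of_lt (by linarith) hx2
      have hxne : x ≠ 0 := by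
        intro h; rw [h] at hSx; simp at hSx
      have hxpos : 0 < ‖x‖ := norm_pos_iff.mpr hxne
      set u := ‖x‖⁻¹ • x with hudef
      have hu : ‖u‖ = 1 := by
        rw [hudef, norm_smul, norm_inv, norm_norm, inv_mul_cancel₀ hxpos.ne']
      have hSu_lb : t - ε₁ < ‖S u‖ := by
        have heq : ‖S u‖ = ‖x‖⁻¹ * ‖S x‖ := by
          rw [hudef, map_smul, norm_smul, norm_inv, norm_norm]
        rw [heq]
        have h1 : ‖S x‖ ≤ ‖x‖⁻¹ * ‖S x‖ := by
          have : 1 ≤ ‖x‖⁻¹ := by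
            rw [le_inv_comm₀] <;> simp [hxpos, hx1.le]
          nlinarith
        linarith
      have hSu_ub : ‖S u‖ ≤ t := by
        have := S.le_opNorm u
        rwa [hu, mul_one, ← ht] at this
      have hinner : ⟪S (S u), u⟫ = ‖S u‖^2 := by
        have h := hS.isSymmetric (S u) u
        simp only [ContinuousLinearMap.coe_coe] at h
        rw [h]
        exact real_inner_self_eq_norm_sq _
      have hSSu : ‖S (S u)‖ ≤ t * ‖S u‖ := by
        have := S.le_opNorm (S u); rwa [← ht] at this
      have hexp : ‖S (S u) - (t*t) • u‖^2
          = ‖S (S u)‖^2 - 2*(t*t)*‖S u‖^2 + (t*t)^2 := by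
        rw [norm_sub_sq_real, real_inner_smul_right, hinner, norm_smul, hu, mul_one]
        rw [Real.norm_eq_abs, abs_of_nonneg (by positivity : (0:ℝ) ≤ t*t)]
        ring
      have hsq : ‖S (S u) - (t*t) • u‖^2 ≤ 2*t^3*ε₁ := by
        have e1 : ‖S (S u)‖^2 ≤ t^2 * ‖S u‖^2 := by
          nlinarith [norm_nonneg (S (S u)), norm_nonneg (S u),
            mul_nonneg htpos.le (norm_nonneg (S u))]
        have e2 : t^2 - ‖S u‖^2 ≤ 2*t*ε₁ := by
          nlinarith [norm_nonneg (S u)]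
        rw [hexp]
        nlinarith [mul_le_mul_of_nonneg_left e2 (sq_nonneg t)]
      have h2 : 2*t^3*ε₁ < δ^2 := by
        have h3 : ε₁ ≤ δ^2/(4*t^3) := min_le_right _ _
        have h4 : 2*t^3*(δ^2/(4*t^3)) = δ^2/2 := by field_simp; ring
        nlinarith [mul_le_mul_of_nonneg_left h3 (by positivity : (0:ℝ) ≤ 2*t^3)]
      refine ⟨u, hu, ?_⟩
      have hlt2 : ‖S (S u) - (t*t) • u‖^2 < δ^2 := lt_of_le_of_lt hsq h2
      exact lt_of_pow_lt_pow_left₀ 2 hδ.le hlt2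
  have hnotunit : ¬ IsUnit (S*S - (t*t) • (1 : E →L[ℝ] E)) := by
    intro h
    set V := ((h.unit⁻¹ : (E →L[ℝ] E)ˣ) : E →L[ℝ] E) with hVdef
    obtain ⟨u, hu, hlt⟩ := hker (1/(‖V‖+1)) (by positivity)
    have hmul : V * (S*S - (t*t) • (1 : E →L[ℝ] E)) = 1 := by
      rw [← h.unit_spec]
      exact h.unit.inv_mul
    have happ : (S*S - (t*t) • (1:E →L[ℝ] E)) u = S (S u) - (t*t) • u := by
      simp [ContinuousLinearMap.mul_apply]
    have hVu : V ((S*S - (t*t) • (1:E →L[ℝ] E)) u) = u := by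
      have := congrArg (fun f : E →L[ℝ] E => f u) hmul
      simpa [ContinuousLinearMap.mul_apply] using this
    have h1 : ‖u‖ ≤ ‖V‖ * ‖S (S u) - (t*t) • u‖ := by
      calc ‖u‖ = ‖V ((S*S - (t*t) • (1:E →L[ℝ] E)) u)‖ := by rw [hVu]
      _ ≤ ‖V‖ * ‖(S*S - (t*t) • (1:E →L[ℝ] E)) u‖ := V.le_opNorm _
      _ = ‖V‖ * ‖S (S u) - (t*t) • u‖ := by rw [happ]
    rw [hu] at h1
    have hVnn : (0:ℝ) ≤ ‖V‖ := norm_nonneg V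
    have hkey : ‖V‖ * (1/(‖V‖+1)) < 1 := by
      rw [mul_one_div, div_lt_one (by positivity)]
      linarith
    nlinarith [norm_nonneg (S (S u) - (t*t) • u)]
  by_contra hcon
  push_neg at hcon
  obtain ⟨h1, h2⟩ := hcon
  rw [spectrum.notMem_iff] at h1 h2
  apply hnotunit
  have ha : (algebraMap ℝ (E →L[ℝ] E) t) * (algebraMap ℝ (E →L[ℝ] E) t)
      = (t*t) • (1 : E →L[ℝ] E) := by
    rw [← map_mul, Algebra.algebraMap_eq_smul_one]
  have hfact : S*S - (t*t) • (1:E →L[ℝ] E)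
      = (S - algebraMap ℝ (E →L[ℝ] E) t) * (S + algebraMap ℝ (E →L[ℝ] E) t) := by
    rw [sub_mul, mul_add, mul_add, ← ha, Algebra.commutes t S]
    abel
  rw [hfact]
  have h1' : IsUnit (S - algebraMap ℝ (E →L[ℝ] E) t) := by
    have := h1.neg; rwa [neg_sub] at this
  have h2' : IsUnit (S + algebraMap ℝ (E →L[ℝ] E) t) := by
    have := h2.neg; rwa [neg_sub, map_neg, sub_neg_eq_add] at this
  exact h1'.mul h2'

set_option maxHeartbeats 1000000 in
/-- Quantitative spectral inclusion for self-adjoint operators: an almost-eigenvector at `μ`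
forces a genuine spectral point near `μ`. -/
lemma sa_spec_near {E : Type*} [NormedAddCommGroup E] [InnerProductSpace ℝ E] [CompleteSpace E]
    {T : E →L[ℝ] E} (hT : IsSelfAdjoint T) {μ c : ℝ} {x : E}
    (hx : x ≠ 0) (hlt : ‖T x - μ • x‖ < c * ‖x‖) :
    ∃ ν ∈ spectrum ℝ T, |ν - μ| ≤ c := by
  have hnt : Nontrivial E := ⟨⟨x, 0, hx⟩⟩
  by_contra hcon
  push_neg at hcon
  have hxpos : 0 < ‖x‖ := norm_pos_iff.mpr hx
  have hc : 0 < c := by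
    by_contra hc0
    push_neg at hc0
    nlinarith [norm_nonneg (T x - μ • x)]
  have hμ : μ ∉ spectrum ℝ T := by
    intro h
    have := hcon μ h
    simp only [sub_self, abs_zero] at this
    linarith
  rw [spectrum.notMem_iff] at hμ
  set w := hμ.unit with hwdef
  set V := ((w⁻¹ : (E →L[ℝ] E)ˣ) : E →L[ℝ] E) with hVdef
  have hwval : (w : E →L[ℝ] E) = algebraMap ℝ (E →L[ℝ] E) μ - T := hμ.unit_spec
  have hwsa : IsSelfAdjoint (w : E →L[ℝ] E) := by
    rw [hwval, Algebra.algebraMap_eq_smul_one]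
    exact (by rw [IsSelfAdjoint, star_smul, star_trivial, star_one] :
      IsSelfAdjoint (μ • (1 : E →L[ℝ] E))).sub hT
  have hVsa : IsSelfAdjoint V := unit_inv_sa hwsa
  have hVx : V ((w : E →L[ℝ] E) x) = x := by
    have hmul : V * (w : E →L[ℝ] E) = 1 := w.inv_mul
    have := congrArg (fun f : E →L[ℝ] E => f x) hmul
    simpa [ContinuousLinearMap.mul_apply] using this
  have hwx : ‖(w : E →L[ℝ] E) x‖ = ‖T x - μ • x‖ := by
    have happ : (w : E →L[ℝ] E) x = μ • x - T x := by
      rw [hwval]; simp [Algebra.algebraMap_eq_smul_one]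
    rw [happ, norm_sub_rev]
  have hxle : ‖x‖ ≤ ‖V‖ * ‖T x - μ • x‖ := by
    calc ‖x‖ = ‖V ((w : E →L[ℝ] E) x)‖ := by rw [hVx]
    _ ≤ ‖V‖ * ‖(w : E →L[ℝ] E) x‖ := V.le_opNorm _
    _ = ‖V‖ * ‖T x - μ • x‖ := by rw [hwx]
  have hVpos : 0 < ‖V‖ := by
    by_contra h0
    push_neg at h0
    nlinarith [norm_nonneg V, norm_nonneg (T x - μ • x)]
  have hcV : 1 < c * ‖V‖ := by nlinarith [norm_nonneg (T x - μ • x)]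
  obtain ⟨z, hzmem, hzabs⟩ : ∃ z, z ∈ spectrum ℝ V ∧ |z| = ‖V‖ := by
    rcases sa_norm_mem hVsa with h | h
    · exact ⟨‖V‖, h, abs_of_nonneg (norm_nonneg V)⟩
    · exact ⟨-‖V‖, h, by rw [abs_neg, abs_of_nonneg (norm_nonneg V)]⟩
  have hzne : z ≠ 0 := by
    intro h
    rw [h, abs_zero] at hzabs
    exact hVpos.ne hzabs
  have hzinv : z⁻¹ ∈ spectrum ℝ ((w : (E →L[ℝ] E)ˣ) : E →L[ℝ] E) := by
    have h := (spectrum.inv_mem_iff (r := Units.mk0 z hzne) (a := w⁻¹)).mp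
      (by simpa using hzmem)
    rw [inv_inv] at h
    simpa using h
  have hν : (μ - z⁻¹) ∈ spectrum ℝ T := by
    rw [spectrum.mem_iff]
    intro hu2
    apply spectrum.mem_iff.mp hzinv
    have heq : algebraMap ℝ (E →L[ℝ] E) z⁻¹ - (w : E →L[ℝ] E)
        = -(algebraMap ℝ (E →L[ℝ] E) (μ - z⁻¹) - T) := by
      rw [hwval, map_sub]; abel
    rw [heq]
    exact hu2.neg
  have hfin := hcon _ hν
  have habs : |(μ - z⁻¹) - μ| = ‖V‖⁻¹ := by
    have he : (μ - z⁻¹) - μ = -z⁻¹ := by ring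
    rw [he, abs_neg, abs_inv, hzabs]
  rw [habs] at hfin
  have : ‖V‖⁻¹ < c := by
    rw [inv_lt_iff_one_lt_mul₀ hVpos]
    linarith [hcV]
  linarith

/-- Packaging a two-sided resolvent identity into a unit of the operator algebra. -/
lemma resolvent_unit {E : Type*} [NormedAddCommGroup E] [InnerProductSpace ℝ E]
    {B Rb : E →L[ℝ] E} (h : ∀ x, Rb (B x + x) = x ∧ B (Rb x) + Rb x = x) :
    ∃ w : (E →L[ℝ] E)ˣ, (w : E →L[ℝ] E) = B + 1 ∧ ((w⁻¹ : (E →L[ℝ] E)ˣ) : E →L[ℝ] E) = Rb := by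
  refine ⟨⟨B + 1, Rb, ?_, ?_⟩, rfl, rfl⟩ <;> ext x <;>
    simp [ContinuousLinearMap.mul_apply, ContinuousLinearMap.add_apply, (h x).1, (h x).2]

/-- strong two-scale resolvent convergence implies spectral inclusion:
every point of the spectrum of the limit operator `A` is a limit of spectral points of `Aε`.
The two-scale convergence relation `TS` links families in `H` to elements of `H₀`; it is
assumed to be compatible with norms and linear combinations, every limit is attained, and
the resolvents `Rε = (Aε + I)⁻¹`, `R = (A + I)⁻¹` intertwine with `TS`. -/
theorem stmt_17 {H H₀ : Type*}
    [NormedAddCommGroup H] [InnerProductSpace ℝ H] [CompleteSpace H]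
    [NormedAddCommGroup H₀] [InnerProductSpace ℝ H₀] [CompleteSpace H₀]
    (Aε : ℝ → H →L[ℝ] H) (A : H₀ →L[ℝ] H₀)
    (hAε_sa : ∀ ε > (0:ℝ), IsSelfAdjoint (Aε ε)) (hA_sa : IsSelfAdjoint A)
    (Rε : ℝ → H →L[ℝ] H) (R : H₀ →L[ℝ] H₀)
    (hRε : ∀ ε > (0:ℝ), ∀ x : H, Rε ε (Aε ε x + x) = x ∧ Aε ε (Rε ε x) + Rε ε x = x)
    (hR : ∀ x : H₀, R (A x + x) = x ∧ A (R x) + R x = x)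
    (TS : (ℝ → H) → H₀ → Prop)
    (hTS_exists : ∀ f : H₀, ∃ fε : ℝ → H, TS fε f)
    (hTS_norm : ∀ (fε : ℝ → H) (f : H₀), TS fε f →
      Tendsto (fun ε => ‖fε ε‖) (nhdsWithin 0 (Set.Ioi 0)) (nhds ‖f‖))
    (hTS_lin : ∀ (fε : ℝ → H) (f : H₀) (gε : ℝ → H) (g : H₀) (c : ℝ),
      TS fε f → TS gε g → TS (fun ε => fε ε + c • gε ε) (f + c • g))
    (hres : ∀ (fε : ℝ → H) (f : H₀), TS fε f → TS (fun ε => Rε ε (fε ε)) (R f)) :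
    ∀ lam ∈ spectrum ℝ A, ∃ εs lams : ℕ → ℝ,
      (∀ m, 0 < εs m) ∧ Tendsto εs atTop (nhds 0) ∧
      (∀ m, lams m ∈ spectrum ℝ (Aε (εs m))) ∧
      Tendsto lams atTop (nhds lam) := by
  intro lam hlam
  obtain ⟨wA, hwAval, hwAinv⟩ := resolvent_unit hR
  have hA1sa : IsSelfAdjoint (wA : H₀ →L[ℝ] H₀) := by
    rw [hwAval]; exact hA_sa.add (sa_one H₀)
  have hRsa : IsSelfAdjoint R := by
    rw [← hwAinv]; exact unit_inv_sa hA1sa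
  -- `lam + 1` is in the spectrum of `A + 1` and is nonzero
  have h1 : lam + 1 ∈ spectrum ℝ (A + 1) := by
    have h := Set.add_mem_add hlam (Set.mem_singleton (1:ℝ))
    rwa [spectrum.add_singleton_eq, map_one] at h
  have hlam1ne : lam + 1 ≠ 0 := by
    intro h0
    have hz := spectrum.zero_notMem ℝ wA.isUnit
    rw [hwAval] at hz
    exact hz (h0 ▸ h1)
  obtain ⟨μ, hμdef⟩ : ∃ μ : ℝ, μ = (lam + 1)⁻¹ := ⟨_, rfl⟩
  have hμne : μ ≠ 0 := by rw [hμdef]; exact inv_ne_zero hlam1ne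
  have hμinv : μ⁻¹ = lam + 1 := by rw [hμdef, inv_inv]
  have hμmem : μ ∈ spectrum ℝ R := by
    have h2 := (spectrum.inv_mem_iff (r := Units.mk0 (lam+1) hlam1ne) (a := wA)).mp
      (by rw [hwAval]; simpa using h1)
    rw [hwAinv] at h2
    rw [hμdef]
    simpa using h2
  have hμ2 : 0 < μ^2 := by
    rw [← sq_abs]; exact pow_pos (abs_pos.mpr hμne) 2
  have hμa : 0 < |μ| := abs_pos.mpr hμne
  -- quantitative step
  have key : ∀ δ > (0:ℝ), ∀ ε₀ > (0:ℝ), ∃ ε l, (0 < ε ∧ ε < ε₀) ∧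
      l ∈ spectrum ℝ (Aε ε) ∧ |l - lam| < δ := by
    intro δ hδ ε₀ hε₀
    set κ : ℝ := min (|μ|/2) (δ*μ^2/4) with hκdef
    have hκpos : 0 < κ := lt_min (by positivity) (by positivity)
    obtain ⟨u, hu1, hu2⟩ := sa_approx hRsa hμmem (show (0:ℝ) < κ/4 by linarith)
    obtain ⟨fε, hfε⟩ := hTS_exists u
    have hgε := hTS_lin _ _ _ _ (-μ) (hres fε u hfε) hfε
    have hn1 := hTS_norm fε u hfε
    rw [hu1] at hn1
    have hn2 := hTS_norm _ _ hgε
    have hgnorm : ‖R u + (-μ) • u‖ < κ/4 := by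
      rw [neg_smul, ← sub_eq_add_neg]; exact hu2
    have ev1 : ∀ᶠ ε in nhdsWithin (0:ℝ) (Set.Ioi 0), 1/2 < ‖fε ε‖ :=
      hn1.eventually (eventually_gt_nhds (by norm_num))
    have ev2 : ∀ᶠ ε in nhdsWithin (0:ℝ) (Set.Ioi 0),
        ‖Rε ε (fε ε) + (-μ) • fε ε‖ < κ/4 :=
      hn2.eventually (eventually_lt_nhds hgnorm)
    have ev3 : ∀ᶠ ε in nhdsWithin (0:ℝ) (Set.Ioi 0), ε ∈ Set.Ioo 0 ε₀ :=
      Filter.eventually_of_mem (Ioo_mem_nhdsGT_of_mem ⟨le_refl 0, hε₀⟩) fun x hx => hx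
    obtain ⟨ε, ⟨hε1, hε2⟩, hεIoo⟩ := ((ev1.and ev2).and ev3).exists
    obtain ⟨wB, hwBval, hwBinv⟩ := resolvent_unit (hRε ε hεIoo.1)
    have hB1sa : IsSelfAdjoint (wB : H →L[ℝ] H) := by
      rw [hwBval]; exact (hAε_sa ε hεIoo.1).add (sa_one H)
    have hTsa : IsSelfAdjoint (Rε ε) := by
      rw [← hwBinv]; exact unit_inv_sa hB1sa
    have hxne : fε ε ≠ 0 := by
      intro h
      rw [h, norm_zero] at hε1
      linarith
    have hTx : ‖Rε ε (fε ε) - μ • fε ε‖ < (κ/2) * ‖fε ε‖ := by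
      rw [neg_smul, ← sub_eq_add_neg] at hε2
      nlinarith
    obtain ⟨ν, hνmem, hνabs⟩ := sa_spec_near hTsa hxne hTx
    have hκμ : κ ≤ |μ|/2 := min_le_left _ _
    have hκ2 : κ ≤ δ*μ^2/4 := min_le_right _ _
    have hbsub : |μ - ν| ≤ κ/2 := by rwa [abs_sub_comm]
    have hνabs' : |μ|/2 ≤ |ν| := by
      have h := abs_sub_abs_le_abs_sub μ ν
      linarith
    have hνne : ν ≠ 0 := by
      intro h
      rw [h, abs_zero] at hνabs'
      linarith
    have hνinv : ν⁻¹ ∈ spectrum ℝ ((wB : (H →L[ℝ] H)ˣ) : H →L[ℝ] H) := by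
      have h := (spectrum.inv_mem_iff (r := Units.mk0 ν hνne) (a := wB⁻¹)).mp
        (by rw [hwBinv]; simpa using hνmem)
      rw [inv_inv] at h
      simpa using h
    have hl : ν⁻¹ - 1 ∈ spectrum ℝ (Aε ε) := by
      have h := hνinv
      rw [hwBval] at h
      have h2 : ν⁻¹ ∈ spectrum ℝ (Aε ε) + ({1} : Set ℝ) := by
        rw [spectrum.add_singleton_eq, map_one]; exact h
      obtain ⟨s, hs, y, hy, hsy⟩ := Set.mem_add.mp h2
      rw [Set.mem_singleton_iff] at hy
      have hseq : s = ν⁻¹ - 1 := by rw [hy] at hsy; linarith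
      rwa [← hseq]
    refine ⟨ε, ν⁻¹ - 1, ⟨hεIoo.1, hεIoo.2⟩, hl, ?_⟩
    have hlameq : lam = μ⁻¹ - 1 := by rw [hμinv]; ring
    rw [hlameq]
    have he : (ν⁻¹ - 1) - (μ⁻¹ - 1) = (μ - ν) * (μ⁻¹ * ν⁻¹) := by
      field_simp
      ring
    have hprod : 0 < |μ| * |ν| := by positivity
    rw [he, abs_mul, abs_mul, abs_inv, abs_inv,
      show |μ|⁻¹ * |ν|⁻¹ = (|μ| * |ν|)⁻¹ by rw [mul_inv], ← div_eq_mul_inv,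
      div_lt_iff₀ hprod]
    nlinarith [mul_le_mul_of_nonneg_left hνabs' (mul_pos hδ hμa).le, sq_abs μ,
      mul_pos (mul_pos hδ hμa) hμa]
  -- extract a sequence
  have hseq : ∀ m : ℕ, ∃ ε l, (0 < ε ∧ ε < 1/((m:ℝ)+1)) ∧
      l ∈ spectrum ℝ (Aε ε) ∧ |l - lam| < 1/((m:ℝ)+1) :=
    fun m => key _ (by positivity) _ (by positivity)
  choose εs lams hP hQ hS using hseq
  refine ⟨εs, lams, fun m => (hP m).1, ?_, hQ, ?_⟩
  · exact squeeze_zero (fun m => (hP m).1.le) (fun m => (hP m).2.le)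
      tendsto_one_div_add_atTop_nhds_zero_nat
  · rw [tendsto_iff_dist_tendsto_zero]
    refine squeeze_zero (fun m => dist_nonneg) (fun m => ?_)
      tendsto_one_div_add_atTop_nhds_zero_nat
    rw [Real.dist_eq]
    exact (hS m).le
end
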